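/- Theorem 1: Assume (A1)–(A3), (A5), (A6), the MSM, and either (A4.1) or (A4.2). Then the following are equivalent: (i) θ_sw^(m) = θ^(K); (ii) θ_rsw^(m) = θ^(K); (iii) θ_sw^(m) = θ_rsw^(m). -/

import Mathlib

open MeasureTheory Finset
open scoped Classical

namespace MSMPaper

noncomputable section

variable {Ω : Type*} [MeasurableSpace Ω] {𝓛 : Type*}

/-- Conditional probability `P(E | F) = P(E ∩ F) / P(F)` as a real number
(junk value `0` when `P F = 0`). -/
def cP (P : Measure Ω) (E F : Set Ω) : ℝ := (P (E ∩ F)).toReal / (P F).toReal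

variable {K : ℕ}

/-- Event `Ā(t−1) = b̄` (treatment history up to, not including, time `t`). -/
def Apast (A : Fin K → Ω → Bool) (t : ℕ) (b : Fin K → Bool) : Set Ω :=
  {ω | ∀ k : Fin K, (k : ℕ) < t → A k ω = b k}

/-- Event `L̄(t) = l̄` (covariate history up to and including time `t`). -/
def Lpast (L : Fin K → Ω → 𝓛) (t : ℕ) (l : Fin K → 𝓛) : Set Ω :=
  {ω | ∀ k : Fin K, (k : ℕ) ≤ t → L k ω = l k}

/-- Event `A̲(s, t−1) = b` (treatment history from time `s` up to, not including, `t`). -/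
def Aseg (A : Fin K → Ω → Bool) (s t : ℕ) (b : Fin K → Bool) : Set Ω :=
  {ω | ∀ k : Fin K, s ≤ (k : ℕ) → (k : ℕ) < t → A k ω = b k}

/-- Event `A̲(K−m) = a̲` for a (last-`m`) treatment vector `as`. -/
def EtrV (A : Fin K → Ω → Bool) (m : ℕ) (as : Fin K → Bool) : Set Ω :=
  {ω | ∀ k : Fin K, K - m ≤ (k : ℕ) → A k ω = as k}

/-- Event `A̲(K−m) = a_m` (constant `a` on the last `m` coordinates). -/
def Etr (A : Fin K → Ω → Bool) (m : ℕ) (a : Bool) : Set Ω :=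
  EtrV A m (fun _ => a)

/-- Stabilized weights `W_sw`. -/
def Wsw (P : Measure Ω) (A : Fin K → Ω → Bool) (L : Fin K → Ω → 𝓛) : Ω → ℝ :=
  fun ω => ∏ k : Fin K,
    cP P {ω' | A k ω' = A k ω} (Apast A (k : ℕ) (fun j => A j ω)) /
      cP P {ω' | A k ω' = A k ω}
        (Lpast L (k : ℕ) (fun j => L j ω) ∩ Apast A (k : ℕ) (fun j => A j ω))

/-- Restricted stabilized weights `W_rsw^(m)`. -/
def Wrsw (P : Measure Ω) (A : Fin K → Ω → Bool) (L : Fin K → Ω → 𝓛) (m : ℕ) : Ω → ℝ :=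
  fun ω => ∏ k ∈ Finset.univ.filter (fun k : Fin K => K - m ≤ (k : ℕ)),
    cP P {ω' | A k ω' = A k ω} (Aseg A (K - m) (k : ℕ) (fun j => A j ω)) /
      cP P {ω' | A k ω' = A k ω}
        (Lpast L (k : ℕ) (fun j => L j ω) ∩ Apast A (k : ℕ) (fun j => A j ω))

/-- Partial stabilized weights `W_psw^(m)`. -/
def Wpsw (P : Measure Ω) (A : Fin K → Ω → Bool) (L : Fin K → Ω → 𝓛) (m : ℕ) : Ω → ℝ :=
  fun ω => ∏ k ∈ Finset.univ.filter (fun k : Fin K => K - m ≤ (k : ℕ)),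
    cP P {ω' | A k ω' = A k ω} (Apast A (k : ℕ) (fun j => A j ω)) /
      cP P {ω' | A k ω' = A k ω}
        (Lpast L (k : ℕ) (fun j => L j ω) ∩ Apast A (k : ℕ) (fun j => A j ω))

/-- IP-weighted contrast `θ_W^(m)`. -/
def θW (P : Measure Ω) (A : Fin K → Ω → Bool) (m : ℕ) (W Y : Ω → ℝ) : ℝ :=
  (∫ ω in Etr A m true, W ω * Y ω ∂P) / (∫ ω in Etr A m true, W ω ∂P) -
    (∫ ω in Etr A m false, W ω * Y ω ∂P) / (∫ ω in Etr A m false, W ω ∂P)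

/-- `rev j` is the time index `K − 1 − j`; the paper's coefficient `ψ_{j+1}`
multiplies `a(K − (j+1)) = a(rev j)`. -/
def rev (j : Fin K) : Fin K := ⟨K - 1 - (j : ℕ), by have := j.isLt; omega⟩

/-- `θ^(K) = 𝔼[Y^{1_K}] − 𝔼[Y^{0_K}]`. -/
def θKfull (P : Measure Ω) (Ypot : (Fin K → Bool) → Ω → ℝ) : ℝ :=
  (∫ ω, Ypot (fun _ => true) ω ∂P) - ∫ ω, Ypot (fun _ => false) ω ∂P

/-- (A1) consistency. -/
def A1ok (A : Fin K → Ω → Bool) (Y : Ω → ℝ) (Ypot : (Fin K → Bool) → Ω → ℝ) : Prop :=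
  ∀ (a : Fin K → Bool) (ω : Ω), (∀ k, A k ω = a k) → Y ω = Ypot a ω

/-- (A2) sequential exchangeability. -/
def A2ok (P : Measure Ω) (A : Fin K → Ω → Bool) (L : Fin K → Ω → 𝓛)
    (Ypot : (Fin K → Bool) → Ω → ℝ) : Prop :=
  ∀ (t : Fin K) (a : Fin K → Bool) (B : Set ℝ), MeasurableSet B →
    ∀ (av : Bool) (l : Fin K → 𝓛) (b : Fin K → Bool),
      0 < P (Lpast L (t : ℕ) l ∩ Apast A (t : ℕ) b) →
      cP P ({ω | Ypot a ω ∈ B} ∩ {ω | A t ω = av}) (Lpast L (t : ℕ) l ∩ Apast A (t : ℕ) b) =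
        cP P {ω | Ypot a ω ∈ B} (Lpast L (t : ℕ) l ∩ Apast A (t : ℕ) b) *
          cP P {ω | A t ω = av} (Lpast L (t : ℕ) l ∩ Apast A (t : ℕ) b)

/-- (A3) positivity. -/
def A3ok (P : Measure Ω) (A : Fin K → Ω → Bool) (L : Fin K → Ω → 𝓛) : Prop :=
  ∀ (t : Fin K) (av : Bool) (l : Fin K → 𝓛) (b : Fin K → Bool),
    0 < P (Lpast L (t : ℕ) l ∩ Apast A (t : ℕ) b) →
    0 < cP P {ω | A t ω = av} (Lpast L (t : ℕ) l ∩ Apast A (t : ℕ) b)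

/-- The marginal structural model `𝔼[Y^{ā}] = ψ₀ + Σ_{j=1}^K ψ_j a(K−j)`;
here `ψ j` is the paper's `ψ_{j+1}`, the coefficient of `a(K−1−j)`. -/
def MSMeq (P : Measure Ω) (Ypot : (Fin K → Bool) → Ω → ℝ) (ψ0 : ℝ) (ψ : Fin K → ℝ) : Prop :=
  ∀ a : Fin K → Bool,
    (∫ ω, Ypot a ω ∂P) = ψ0 + ∑ j : Fin K, ψ j * (if a (rev j) = true then 1 else 0)

/-- (A5) conditional MSM given the past treatment history `Ā(K−m−1)`. -/
def A5ok (P : Measure Ω) (A : Fin K → Ω → Bool) (Ypot : (Fin K → Bool) → Ω → ℝ)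
    (m : ℕ) : Prop :=
  ∀ b : Fin K → Bool, 0 < P (Apast A (K - m) b) →
    ∃ (φ0 : ℝ) (φ : Fin K → ℝ), ∀ a : Fin K → Bool,
      (∫ ω in Apast A (K - m) b, Ypot a ω ∂P) / (P (Apast A (K - m) b)).toReal =
        φ0 + ∑ j : Fin K, φ j * (if a (rev j) = true then 1 else 0)

/-- `q_{j+1} = P(A(K−1−j)=1 | A̲(K−m)=1_m) − P(A(K−1−j)=1 | A̲(K−m)=0_m)`. -/
def qcoef (P : Measure Ω) (A : Fin K → Ω → Bool) (m : ℕ) (j : Fin K) : ℝ :=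
  cP P {ω | A (rev j) ω = true} (Etr A m true) -
    cP P {ω | A (rev j) ω = true} (Etr A m false)

end

section Aux
set_option linter.unusedSectionVars false

variable {Ω : Type*} [MeasurableSpace Ω] {𝓛 : Type*} [MeasurableSpace 𝓛]
  [Fintype 𝓛] [Nonempty 𝓛] [MeasurableSingletonClass 𝓛]
variable {K : ℕ}

/-- L-history strictly below `t`. -/
def LpastLT (L : Fin K → Ω → 𝓛) (l : Fin K → 𝓛) (t : ℕ) : Set Ω :=
  {ω | ∀ k : Fin K, (k : ℕ) < t → L k ω = l k}

lemma mGuard {p : Prop} {S : Set Ω} (hS : MeasurableSet S) :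
    MeasurableSet {ω | p → ω ∈ S} := by
  by_cases h : p
  · have : {ω | p → ω ∈ S} = S := by ext ω; simp [h]
    rw [this]; exact hS
  · have : {ω | p → ω ∈ S} = Set.univ := by ext ω; simp [h]
    rw [this]; exact MeasurableSet.univ

lemma mEq {α : Type*} [MeasurableSpace α] [MeasurableSingletonClass α]
    {f : Ω → α} (hf : Measurable f) (v : α) : MeasurableSet {ω | f ω = v} :=
  hf (measurableSet_singleton v)

lemma mApast {A : Fin K → Ω → Bool} (hA : ∀ k, Measurable (A k)) (t : ℕ) (b : Fin K → Bool) :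
    MeasurableSet (Apast A t b) := by
  have : Apast A t b = ⋂ k : Fin K, {ω | (k:ℕ) < t → ω ∈ {ω' | A k ω' = b k}} := by
    ext ω; simp [Apast, Set.mem_iInter]
  rw [this]
  exact MeasurableSet.iInter fun k => mGuard (mEq (hA k) (b k))

lemma mLpast {L : Fin K → Ω → 𝓛} (hL : ∀ k, Measurable (L k)) (t : ℕ) (l : Fin K → 𝓛) :
    MeasurableSet (Lpast L t l) := by
  have : Lpast L t l = ⋂ k : Fin K, {ω | (k:ℕ) ≤ t → ω ∈ {ω' | L k ω' = l k}} := by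
    ext ω; simp [Lpast, Set.mem_iInter]
  rw [this]
  exact MeasurableSet.iInter fun k => mGuard (mEq (hL k) (l k))

lemma mLpastLT {L : Fin K → Ω → 𝓛} (hL : ∀ k, Measurable (L k)) (l : Fin K → 𝓛) (t : ℕ) :
    MeasurableSet (LpastLT L l t) := by
  have : LpastLT L l t = ⋂ k : Fin K, {ω | (k:ℕ) < t → ω ∈ {ω' | L k ω' = l k}} := by
    ext ω; simp [LpastLT, Set.mem_iInter]
  rw [this]
  exact MeasurableSet.iInter fun k => mGuard (mEq (hL k) (l k))

lemma mAseg {A : Fin K → Ω → Bool} (hA : ∀ k, Measurable (A k)) (s t : ℕ) (b : Fin K → Bool) :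
    MeasurableSet (Aseg A s t b) := by
  have : Aseg A s t b = ⋂ k : Fin K, {ω | (s ≤ (k:ℕ) ∧ (k:ℕ) < t) → ω ∈ {ω' | A k ω' = b k}} := by
    ext ω; simp [Aseg, Set.mem_iInter]
  rw [this]
  exact MeasurableSet.iInter fun k => mGuard (mEq (hA k) (b k))

lemma mEtrV {A : Fin K → Ω → Bool} (hA : ∀ k, Measurable (A k)) (m : ℕ) (as : Fin K → Bool) :
    MeasurableSet (EtrV A m as) := by
  have : EtrV A m as = ⋂ k : Fin K, {ω | K - m ≤ (k:ℕ) → ω ∈ {ω' | A k ω' = as k}} := by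
    ext ω; simp [EtrV, Set.mem_iInter]
  rw [this]
  exact MeasurableSet.iInter fun k => mGuard (mEq (hA k) (as k))

lemma mEtr {A : Fin K → Ω → Bool} (hA : ∀ k, Measurable (A k)) (m : ℕ) (a : Bool) :
    MeasurableSet (Etr A m a) := mEtrV hA m _

-- basic set identities
lemma Apast_zero (A : Fin K → Ω → Bool) (b : Fin K → Bool) : Apast A 0 b = Set.univ := by
  ext ω; simp [Apast]

lemma Apast_succ (A : Fin K → Ω → Bool) (b : Fin K → Bool) {t : ℕ} (ht : t < K) :
    Apast A (t+1) b = Apast A t b ∩ {ω | A ⟨t, ht⟩ ω = b ⟨t, ht⟩} := by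
  ext ω
  simp only [Apast, Set.mem_setOf_eq, Set.mem_inter_iff]
  constructor
  · intro h
    exact ⟨fun k hk => h k (by omega), h ⟨t, ht⟩ (by simp)⟩
  · rintro ⟨h1, h2⟩ k hk
    rcases Nat.lt_succ_iff_lt_or_eq.mp hk with h | h
    · exact h1 k h
    · have : k = ⟨t, ht⟩ := Fin.ext h
      rw [this]; exact h2

lemma Aseg_self (A : Fin K → Ω → Bool) (s : ℕ) (b : Fin K → Bool) :
    Aseg A s s b = Set.univ := by
  ext ω; simp only [Aseg, Set.mem_setOf_eq, Set.mem_univ, iff_true]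
  intro k h1 h2; omega

lemma Aseg_succ (A : Fin K → Ω → Bool) (b : Fin K → Bool) {s t : ℕ} (hs : s ≤ t) (ht : t < K) :
    Aseg A s (t+1) b = Aseg A s t b ∩ {ω | A ⟨t, ht⟩ ω = b ⟨t, ht⟩} := by
  ext ω
  simp only [Aseg, Set.mem_setOf_eq, Set.mem_inter_iff]
  constructor
  · intro h
    exact ⟨fun k hk1 hk2 => h k hk1 (by omega), h ⟨t, ht⟩ (by simpa) (by simp)⟩
  · rintro ⟨h1, h2⟩ k hk1 hk2
    rcases Nat.lt_succ_iff_lt_or_eq.mp hk2 with h | h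
    · exact h1 k hk1 h
    · have : k = ⟨t, ht⟩ := Fin.ext h
      rw [this]; exact h2

lemma LpastLT_zero (L : Fin K → Ω → 𝓛) (l : Fin K → 𝓛) : LpastLT L l 0 = Set.univ := by
  ext ω; simp [LpastLT]

lemma Lpast_eq_LpastLT (L : Fin K → Ω → 𝓛) (t : ℕ) (l : Fin K → 𝓛) :
    Lpast L t l = LpastLT L l (t+1) := by
  ext ω; simp only [Lpast, LpastLT, Set.mem_setOf_eq, Nat.lt_succ_iff]

lemma LpastLT_congr (L : Fin K → Ω → 𝓛) {l l' : Fin K → 𝓛} (t : ℕ)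
    (h : ∀ k : Fin K, (k:ℕ) < t → l k = l' k) : LpastLT L l t = LpastLT L l' t := by
  ext ω; constructor <;> intro hω k hk
  · rw [← h k hk]; exact hω k hk
  · rw [h k hk]; exact hω k hk

lemma Lpast_congr (L : Fin K → Ω → 𝓛) {l l' : Fin K → 𝓛} (t : ℕ)
    (h : ∀ k : Fin K, (k:ℕ) ≤ t → l k = l' k) : Lpast L t l = Lpast L t l' := by
  ext ω; constructor <;> intro hω k hk
  · rw [← h k hk]; exact hω k hk
  · rw [h k hk]; exact hω k hk

end Aux
section Aux2
set_option linter.unusedSectionVars false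
variable {Ω : Type*} [MeasurableSpace Ω] {𝓛 : Type*} [MeasurableSpace 𝓛]
  [Fintype 𝓛] [Nonempty 𝓛] [MeasurableSingletonClass 𝓛]
variable {K : ℕ}

lemma cP_nonneg (P : Measure Ω) (E F : Set Ω) : 0 ≤ cP P E F :=
  div_nonneg ENNReal.toReal_nonneg ENNReal.toReal_nonneg

lemma toReal_pos_of_pos {P : Measure Ω} [IsFiniteMeasure P] {S : Set Ω} (h : 0 < P S) :
    0 < (P S).toReal := ENNReal.toReal_pos h.ne' (measure_ne_top P S)

lemma toReal_ne_zero_of_pos {P : Measure Ω} [IsFiniteMeasure P] {S : Set Ω} (h : 0 < P S) :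
    (P S).toReal ≠ 0 := (toReal_pos_of_pos h).ne'

lemma cP_mul {P : Measure Ω} [IsFiniteMeasure P] {E F : Set Ω} (hF : 0 < P F) :
    (P (E ∩ F)).toReal = cP P E F * (P F).toReal := by
  rw [cP, div_mul_cancel₀ _ (toReal_ne_zero_of_pos hF)]

lemma cP_zero {P : Measure Ω} {E F : Set Ω} (hF : P F = 0) : cP P E F = 0 := by
  rw [cP, hF]; simp

/-- Key step lemma: factorization of conditional probabilities gives the IPW step. -/
lemma step_factor (P : Measure Ω) [IsProbabilityMeasure P]
    {f : Ω → ℝ} (hfm : Measurable f) {G F : Set Ω} (hGm : MeasurableSet G)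
    (hF : 0 < P F)
    (hfac : ∀ B : Set ℝ, MeasurableSet B →
      cP P ({ω | f ω ∈ B} ∩ G) F = cP P {ω | f ω ∈ B} F * cP P G F) :
    ∫ ω in F ∩ G, f ω ∂P = cP P G F * ∫ ω in F, f ω ∂P := by
  set c := cP P G F with hc
  have hc0 : 0 ≤ c := cP_nonneg P G F
  have hFne : (P F).toReal ≠ 0 := toReal_ne_zero_of_pos hF
  have hmain : Measure.map f (P.restrict (F ∩ G)) =
      ENNReal.ofReal c • Measure.map f (P.restrict F) := by
    ext B hB
    rw [Measure.smul_apply, Measure.map_apply hfm hB, Measure.map_apply hfm hB,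
      Measure.restrict_apply (hfm hB), Measure.restrict_apply (hfm hB)]
    have h1 := hfac B hB
    rw [cP, cP] at h1
    have h2 : (P (({ω | f ω ∈ B} ∩ G) ∩ F)).toReal =
        (P ({ω | f ω ∈ B} ∩ F)).toReal * c := by
      field_simp at h1
      linarith [h1]
    have hset : f ⁻¹' B ∩ (F ∩ G) = ({ω | f ω ∈ B} ∩ G) ∩ F := by
      ext x; simp only [Set.mem_inter_iff, Set.mem_preimage, Set.mem_setOf_eq]; tauto
    have hset2 : f ⁻¹' B ∩ F = {ω | f ω ∈ B} ∩ F := rfl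
    rw [hset, hset2, smul_eq_mul]
    calc P (({ω | f ω ∈ B} ∩ G) ∩ F)
        = ENNReal.ofReal ((P (({ω | f ω ∈ B} ∩ G) ∩ F)).toReal) :=
          (ENNReal.ofReal_toReal (measure_ne_top _ _)).symm
      _ = ENNReal.ofReal (c * (P ({ω | f ω ∈ B} ∩ F)).toReal) := by rw [h2, mul_comm]
      _ = ENNReal.ofReal c * ENNReal.ofReal ((P ({ω | f ω ∈ B} ∩ F)).toReal) :=
          ENNReal.ofReal_mul hc0
      _ = ENNReal.ofReal c * P ({ω | f ω ∈ B} ∩ F) := by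
          rw [ENNReal.ofReal_toReal (measure_ne_top _ _)]
  have hi1 : ∫ ω in F ∩ G, f ω ∂P = ∫ x, x ∂(Measure.map f (P.restrict (F ∩ G))) :=
    (integral_map hfm.aemeasurable aestronglyMeasurable_id).symm
  have hi2 : ∫ x, x ∂(Measure.map f (P.restrict F)) = ∫ ω in F, f ω ∂P :=
    integral_map hfm.aemeasurable aestronglyMeasurable_id
  rw [hi1, hmain, integral_smul_measure, ENNReal.toReal_ofReal hc0, hi2, smul_eq_mul]

/-- Partition form of set integrals. -/
lemma setIntegral_partition {ι : Type*} (P : Measure Ω) (s : Finset ι)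
    (B : ι → Set Ω) (S : Set Ω)
    (hm : ∀ i ∈ s, MeasurableSet (B i))
    (hdisj : Set.Pairwise ↑s (Function.onFun Disjoint B))
    (hU : (⋃ i ∈ s, B i) = S) (f : Ω → ℝ) (hint : ∀ i ∈ s, IntegrableOn f (B i) P) :
    ∫ ω in S, f ω ∂P = ∑ i ∈ s, ∫ ω in B i, f ω ∂P := by
  rw [← hU]; exact integral_biUnion_finset s hm hdisj hint

lemma measure_toReal_partition {ι : Type*} (P : Measure Ω) [IsFiniteMeasure P] (s : Finset ι)
    (B : ι → Set Ω) (S : Set Ω)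
    (hm : ∀ i ∈ s, MeasurableSet (B i))
    (hdisj : Set.Pairwise ↑s (Function.onFun Disjoint B))
    (hU : (⋃ i ∈ s, B i) = S) :
    (P S).toReal = ∑ i ∈ s, (P (B i)).toReal := by
  rw [← hU, measure_biUnion_finset hdisj hm]
  exact ENNReal.toReal_sum (fun i _ => measure_ne_top P (B i))

end Aux2
section Aux3
set_option linter.unusedSectionVars false
variable {Ω : Type*} [MeasurableSpace Ω] {𝓛 : Type*} [MeasurableSpace 𝓛]
  [Fintype 𝓛] [Nonempty 𝓛] [MeasurableSingletonClass 𝓛]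
variable {K : ℕ}

lemma filter_lt_succ_eq_insert_true {s : ℕ} (hs : s < K) :
    Finset.univ.filter (fun k : Fin K => True ∧ (k:ℕ) < s + 1)
      = insert (⟨s, hs⟩ : Fin K)
          (Finset.univ.filter (fun k : Fin K => True ∧ (k:ℕ) < s)) := by
  ext k
  simp only [Finset.mem_filter, Finset.mem_univ, true_and, Finset.mem_insert]
  constructor
  · intro h2
    rcases Nat.lt_succ_iff_lt_or_eq.mp h2 with h | h
    · exact Or.inr h
    · exact Or.inl (Fin.ext h)
  · rintro (rfl | h2)
    · exact Nat.lt_succ_self s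
    · omega

lemma filter_lt_succ_eq_insert_le {s0 s : ℕ} (hs : s < K) (hp : s0 ≤ s) :
    Finset.univ.filter (fun k : Fin K => s0 ≤ (k:ℕ) ∧ (k:ℕ) < s + 1)
      = insert (⟨s, hs⟩ : Fin K)
          (Finset.univ.filter (fun k : Fin K => s0 ≤ (k:ℕ) ∧ (k:ℕ) < s)) := by
  ext k
  simp only [Finset.mem_filter, Finset.mem_univ, true_and, Finset.mem_insert]
  constructor
  · rintro ⟨h1, h2⟩
    rcases Nat.lt_succ_iff_lt_or_eq.mp h2 with h | h
    · exact Or.inr ⟨h1, h⟩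
    · exact Or.inl (Fin.ext h)
  · rintro (rfl | ⟨h1, h2⟩)
    · exact ⟨hp, Nat.lt_succ_self s⟩
    · exact ⟨h1, by omega⟩

lemma not_mem_filter_lt_true {s : ℕ} (hs : s < K) :
    (⟨s, hs⟩ : Fin K) ∉ Finset.univ.filter (fun k : Fin K => True ∧ (k:ℕ) < s) := by
  simp

lemma not_mem_filter_lt_le {s0 s : ℕ} (hs : s < K) :
    (⟨s, hs⟩ : Fin K) ∉ Finset.univ.filter (fun k : Fin K => s0 ≤ (k:ℕ) ∧ (k:ℕ) < s) := by
  simp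

/-- Telescoping for the `Wsw` numerator. -/
lemma telescope_sw (P : Measure Ω) [IsProbabilityMeasure P]
    (A : Fin K → Ω → Bool) (hA : ∀ k, Measurable (A k)) (b : Fin K → Bool) :
    ∀ t : ℕ, t ≤ K →
    (∏ k ∈ Finset.univ.filter (fun k : Fin K => True ∧ (k:ℕ) < t),
        cP P {ω | A k ω = b k} (Apast A (k:ℕ) b)) = (P (Apast A t b)).toReal := by
  intro t
  induction t with
  | zero =>
    intro _
    rw [Apast_zero, Finset.filter_false_of_mem (fun k _ => by omega), Finset.prod_empty]
    simp
  | succ s ih =>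
    intro hsK
    have hs : s < K := by omega
    rw [filter_lt_succ_eq_insert_true hs,
      Finset.prod_insert (not_mem_filter_lt_true hs), ih (by omega),
      Apast_succ A b hs]
    by_cases hpos : 0 < P (Apast A s b)
    · rw [Set.inter_comm, cP_mul hpos]
    · have h0 : P (Apast A s b) = 0 := by
        by_contra h; exact hpos (pos_iff_ne_zero.mpr h)
      have h1 : P (Apast A s b ∩ {ω | A ⟨s, hs⟩ ω = b ⟨s, hs⟩}) = 0 :=
        le_antisymm (le_trans (measure_mono Set.inter_subset_left) h0.le) zero_le
      rw [h0, h1]; simp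

/-- Telescoping for the `Wrsw` numerator. -/
lemma telescope_rsw (P : Measure Ω) [IsProbabilityMeasure P]
    (A : Fin K → Ω → Bool) (hA : ∀ k, Measurable (A k)) (b : Fin K → Bool) (s0 : ℕ) :
    ∀ t : ℕ, s0 ≤ t → t ≤ K →
    (∏ k ∈ Finset.univ.filter (fun k : Fin K => s0 ≤ (k:ℕ) ∧ (k:ℕ) < t),
        cP P {ω | A k ω = b k} (Aseg A s0 (k:ℕ) b)) = (P (Aseg A s0 t b)).toReal := by
  intro t
  induction t with
  | zero =>
    intro h0 _
    have : s0 = 0 := by omega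
    subst this
    rw [Aseg_self, Finset.filter_false_of_mem (fun k _ => by omega), Finset.prod_empty]
    simp
  | succ s ih =>
    intro hs0 hsK
    have hs : s < K := by omega
    rcases Nat.lt_or_ge s s0 with hlt | hge
    · -- s0 = s + 1 : base case
      have : s0 = s + 1 := by omega
      subst this
      rw [Aseg_self, Finset.filter_false_of_mem (fun k _ => by omega), Finset.prod_empty]
      simp
    · rw [filter_lt_succ_eq_insert_le hs hge,
        Finset.prod_insert (not_mem_filter_lt_le hs), ih hge (by omega),
        Aseg_succ A b hge hs]
      by_cases hpos : 0 < P (Aseg A s0 s b)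
      · rw [Set.inter_comm, cP_mul hpos]
      · have h0 : P (Aseg A s0 s b) = 0 := by
          by_contra h; exact hpos (pos_iff_ne_zero.mpr h)
        have h1 : P (Aseg A s0 s b ∩ {ω | A ⟨s, hs⟩ ω = b ⟨s, hs⟩}) = 0 :=
          le_antisymm (le_trans (measure_mono Set.inter_subset_left) h0.le) zero_le
        rw [h0, h1]; simp

end Aux3
section Aux4
set_option linter.unusedSectionVars false
set_option maxHeartbeats 1000000
variable {Ω : Type*} [MeasurableSpace Ω] {𝓛 : Type*} [MeasurableSpace 𝓛]
  [Fintype 𝓛] [Nonempty 𝓛] [MeasurableSingletonClass 𝓛]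
variable {K : ℕ}

lemma setIntegral_null {P : Measure Ω} {S : Set Ω} (h : P S = 0) {f : Ω → ℝ} :
    ∫ ω in S, f ω ∂P = 0 := by
  rw [Measure.restrict_eq_zero.mpr h]; exact integral_zero_measure f

/-- Partition of any measurable `S` over L-prefix histories. -/
lemma partition_LpastLT (P : Measure Ω) [IsProbabilityMeasure P]
    (L : Fin K → Ω → 𝓛) (hL : ∀ k, Measurable (L k)) (d : 𝓛) (s : ℕ)
    (S : Set Ω) (hS : MeasurableSet S) (f : Ω → ℝ) (hfi : Integrable f P) :
    ∫ ω in S, f ω ∂P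
      = ∑ l ∈ Finset.univ.filter (fun l : Fin K → 𝓛 => ∀ k : Fin K, s ≤ (k:ℕ) → l k = d),
          ∫ ω in LpastLT L l s ∩ S, f ω ∂P := by
  refine setIntegral_partition P _ _ S ?_ ?_ ?_ f ?_
  · exact fun l _ => (mLpastLT hL l s).inter hS
  · intro l hl l' hl' hne
    simp only [Finset.coe_filter, Finset.mem_univ, true_and, Set.mem_setOf_eq] at hl hl'
    have : ∃ k : Fin K, (k:ℕ) < s ∧ l k ≠ l' k := by
      by_contra hc
      push_neg at hc
      exact hne (funext fun k => by
        rcases Nat.lt_or_ge (k:ℕ) s with h | h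
        · exact hc k h
        · rw [hl k h, hl' k h])
    obtain ⟨k, hk, hkne⟩ := this
    refine Set.disjoint_left.mpr fun ω hω hω' => ?_
    exact hkne ((hω.1 k hk).symm.trans (hω'.1 k hk))
  · ext ω
    simp only [Set.mem_iUnion, Finset.mem_filter, Finset.mem_univ, true_and]
    constructor
    · rintro ⟨l, _, hω⟩; exact hω.2
    · intro hω
      refine ⟨fun k => if (k:ℕ) < s then L k ω else d, ?_, ?_, hω⟩
      · intro k hk
        have hns : ¬ (k:ℕ) < s := by omega
        simp [hns]
      · intro k hk; simp [hk]
  · exact fun l _ => hfi.integrableOn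

/-- Partition of a measurable `S` over the value of `L` at one time. -/
lemma partition_Lval (P : Measure Ω) [IsProbabilityMeasure P]
    (L : Fin K → Ω → 𝓛) (hL : ∀ k, Measurable (L k)) (t : Fin K)
    (S : Set Ω) (hS : MeasurableSet S) (f : Ω → ℝ) (hfi : Integrable f P) :
    ∫ ω in S, f ω ∂P = ∑ v : 𝓛, ∫ ω in {ω | L t ω = v} ∩ S, f ω ∂P := by
  refine setIntegral_partition P Finset.univ _ S ?_ ?_ ?_ f ?_
  · exact fun v _ => (mEq (hL t) v).inter hS
  · intro v _ v' _ hne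
    refine Set.disjoint_left.mpr fun ω hω hω' => hne (hω.1.symm.trans hω'.1)
  · ext ω
    simp only [Set.mem_iUnion, Finset.mem_univ, Set.mem_inter_iff, Set.mem_setOf_eq]
    constructor
    · rintro ⟨v, _, _, hω⟩; exact hω
    · intro hω; exact ⟨L t ω, trivial, rfl, hω⟩
  · exact fun v _ => hfi.integrableOn

/-- The central g-computation induction. -/
lemma gcomp (P : Measure Ω) [IsProbabilityMeasure P]
    (A : Fin K → Ω → Bool) (L : Fin K → Ω → 𝓛)
    (hA : ∀ k, Measurable (A k)) (hL : ∀ k, Measurable (L k))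
    (a : Fin K → Bool) (f : Ω → ℝ) (hfm : Measurable f) (hfi : Integrable f P)
    (hstep : ∀ (t : Fin K) (l : Fin K → 𝓛), 0 < P (Lpast L (t:ℕ) l ∩ Apast A (t:ℕ) a) →
      ∫ ω in (Lpast L (t:ℕ) l ∩ Apast A (t:ℕ) a) ∩ {ω | A t ω = a t}, f ω ∂P
        = cP P {ω | A t ω = a t} (Lpast L (t:ℕ) l ∩ Apast A (t:ℕ) a)
            * ∫ ω in Lpast L (t:ℕ) l ∩ Apast A (t:ℕ) a, f ω ∂P)
    (hden : ∀ (t : Fin K) (l : Fin K → 𝓛), 0 < P (Lpast L (t:ℕ) l ∩ Apast A (t:ℕ) a) →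
      0 < cP P {ω | A t ω = a t} (Lpast L (t:ℕ) l ∩ Apast A (t:ℕ) a))
    (d : 𝓛) (t0 : ℕ) :
    ∀ s : ℕ, t0 ≤ s → s ≤ K →
    (∑ l ∈ Finset.univ.filter (fun l : Fin K → 𝓛 => ∀ k : Fin K, s ≤ (k:ℕ) → l k = d),
      (∏ k ∈ Finset.univ.filter (fun k : Fin K => t0 ≤ (k:ℕ) ∧ (k:ℕ) < s),
         cP P {ω | A k ω = a k} (Lpast L (k:ℕ) l ∩ Apast A (k:ℕ) a))⁻¹
        * ∫ ω in LpastLT L l s ∩ Apast A s a, f ω ∂P)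
      = ∫ ω in Apast A t0 a, f ω ∂P := by
  intro s
  induction s with
  | zero =>
    intro h0 _
    have ht0 : t0 = 0 := by omega
    subst ht0
    have hempty : (Finset.univ.filter (fun k : Fin K => 0 ≤ (k:ℕ) ∧ (k:ℕ) < 0)) = (∅ : Finset (Fin K)) := by
      apply Finset.filter_false_of_mem
      intro k _ h
      obtain ⟨h1, h2⟩ := h; omega
    rw [hempty]
    simp only [Finset.prod_empty, inv_one, one_mul]
    exact (partition_LpastLT P L hL d 0 (Apast A 0 a) (mApast hA 0 a) f hfi).symm
  | succ s ih =>
    intro hle hsK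
    have hs : s < K := by omega
    set t : Fin K := ⟨s, hs⟩ with ht
    rcases Nat.lt_or_ge s t0 with hlt | hge
    · -- base case t0 = s + 1
      have ht0 : t0 = s + 1 := by omega
      subst ht0
      have hempty : (Finset.univ.filter (fun k : Fin K => s + 1 ≤ (k:ℕ) ∧ (k:ℕ) < s + 1)) = (∅ : Finset (Fin K)) := by
        apply Finset.filter_false_of_mem
        intro k _ h
        obtain ⟨h1, h2⟩ := h; omega
      rw [hempty]
      simp only [Finset.prod_empty, inv_one, one_mul]
      exact (partition_LpastLT P L hL d (s+1) (Apast A (s+1) a) (mApast hA (s+1) a) f hfi).symm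
    · -- inductive step
      rw [← ih hge (by omega)]
      -- reindex the (s+1)-sum as a double sum
      have hre : ∀ g : (Fin K → 𝓛) → ℝ,
          (∑ l ∈ Finset.univ.filter (fun l : Fin K → 𝓛 => ∀ k : Fin K, s + 1 ≤ (k:ℕ) → l k = d), g l)
            = ∑ l' ∈ Finset.univ.filter (fun l : Fin K → 𝓛 => ∀ k : Fin K, s ≤ (k:ℕ) → l k = d),
                ∑ v : 𝓛, g (Function.update l' t v) := by
        intro g
        rw [← Finset.sum_product']
        refine Finset.sum_nbij' (fun l => (Function.update l t d, l t))
          (fun p => Function.update p.1 t p.2) ?_ ?_ ?_ ?_ ?_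
        · intro l hl
          simp only [Finset.mem_filter, Finset.mem_univ, true_and] at hl ⊢
          rw [Finset.mem_product]
          refine ⟨?_, Finset.mem_univ _⟩
          simp only [Finset.mem_filter, Finset.mem_univ, true_and]
          intro k hk
          by_cases hkt : k = t
          · subst hkt; simp
          · rw [Function.update_of_ne hkt]
            refine hl k ?_
            have : (k:ℕ) ≠ s := fun h => hkt (Fin.ext h)
            omega
        · intro p hp
          rw [Finset.mem_product] at hp
          simp only [Finset.mem_filter, Finset.mem_univ, true_and] at hp ⊢
          intro k hk
          have hkt : k ≠ t := by
            intro h; subst h; simp only [ht] at hk; omega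
          rw [Function.update_of_ne hkt]
          exact hp.1 k (by omega)
        · intro l hl
          simp only [Finset.mem_filter, Finset.mem_univ, true_and] at hl
          simp [Function.update_idem, Function.update_eq_self]
        · intro p hp
          rw [Finset.mem_product] at hp
          simp only [Finset.mem_filter, Finset.mem_univ, true_and] at hp
          have h1 : p.1 t = d := hp.1 t (le_refl s)
          ext
          · simp [Function.update_idem, ← h1, Function.update_eq_self]
          · simp
        · intro l hl
          rw [Function.update_idem, Function.update_eq_self]
      rw [hre]
      refine Finset.sum_congr rfl (fun l' hl' => ?_)
      simp only [Finset.mem_filter, Finset.mem_univ, true_and] at hl'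
      -- the common "previous" product
      set Pprev := ∏ k ∈ Finset.univ.filter (fun k : Fin K => t0 ≤ (k:ℕ) ∧ (k:ℕ) < s),
         cP P {ω | A k ω = a k} (Lpast L (k:ℕ) l' ∩ Apast A (k:ℕ) a) with hPprev
      have hterm : ∀ v : 𝓛,
          (∏ k ∈ Finset.univ.filter (fun k : Fin K => t0 ≤ (k:ℕ) ∧ (k:ℕ) < s + 1),
             cP P {ω | A k ω = a k}
               (Lpast L (k:ℕ) (Function.update l' t v) ∩ Apast A (k:ℕ) a))⁻¹
            * ∫ ω in LpastLT L (Function.update l' t v) (s+1) ∩ Apast A (s+1) a, f ω ∂P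
          = Pprev⁻¹ * ∫ ω in Lpast L s (Function.update l' t v) ∩ Apast A s a, f ω ∂P := by
        intro v
        set lv := Function.update l' t v with hlv
        have hprodsplit :
            (∏ k ∈ Finset.univ.filter (fun k : Fin K => t0 ≤ (k:ℕ) ∧ (k:ℕ) < s + 1),
               cP P {ω | A k ω = a k} (Lpast L (k:ℕ) lv ∩ Apast A (k:ℕ) a))
              = cP P {ω | A t ω = a t} (Lpast L (t:ℕ) lv ∩ Apast A (t:ℕ) a) * Pprev := by
          rw [filter_lt_succ_eq_insert_le hs hge,
            Finset.prod_insert (not_mem_filter_lt_le hs)]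
          congr 1
          refine Finset.prod_congr rfl (fun k hk => ?_)
          simp only [Finset.mem_filter, Finset.mem_univ, true_and] at hk
          congr 1
          congr 1
          refine Lpast_congr L (k:ℕ) (fun j hj => ?_)
          have hjt : j ≠ t := by
            intro h; subst h; simp only [ht] at hj; omega
          rw [hlv, Function.update_of_ne hjt]
        have hseteq : LpastLT L lv (s+1) ∩ Apast A (s+1) a
            = (Lpast L (t:ℕ) lv ∩ Apast A (t:ℕ) a) ∩ {ω | A t ω = a t} := by
          rw [← Lpast_eq_LpastLT, Apast_succ A a hs]
          ext ω; simp only [Set.mem_inter_iff]; tauto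
        have hss : Lpast L s lv ∩ Apast A s a = Lpast L (t:ℕ) lv ∩ Apast A (t:ℕ) a := rfl
        rw [hprodsplit, hseteq, hss]
        by_cases hpos : 0 < P (Lpast L (t:ℕ) lv ∩ Apast A (t:ℕ) a)
        · rw [hstep t lv hpos, mul_inv_rev, mul_assoc,
            inv_mul_cancel_left₀ (hden t lv hpos).ne']
        · have h0 : P (Lpast L (t:ℕ) lv ∩ Apast A (t:ℕ) a) = 0 := by
            by_contra h; exact hpos (pos_iff_ne_zero.mpr h)
          have h1 : P ((Lpast L (t:ℕ) lv ∩ Apast A (t:ℕ) a) ∩ {ω | A t ω = a t}) = 0 :=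
            le_antisymm (le_trans (measure_mono Set.inter_subset_left) h0.le) zero_le
          rw [setIntegral_null h0, setIntegral_null h1]
          simp
      rw [Finset.sum_congr rfl (fun v _ => hterm v), ← Finset.mul_sum]
      congr 1
      have hLsplit : ∀ v : 𝓛, Lpast L s (Function.update l' t v) ∩ Apast A s a
          = {ω | L t ω = v} ∩ (LpastLT L l' s ∩ Apast A s a) := by
        intro v
        rw [Lpast_eq_LpastLT]
        have : LpastLT L (Function.update l' t v) (s+1)
            = {ω | L t ω = v} ∩ LpastLT L l' s := by
          ext ω
          simp only [LpastLT, Set.mem_setOf_eq, Set.mem_inter_iff]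
          constructor
          · intro h
            refine ⟨?_, fun k hk => ?_⟩
            · have := h t (by simp only [ht]; omega)
              rwa [Function.update_self] at this
            · have hkt : k ≠ t := by
                intro hh; subst hh; simp only [ht] at hk; omega
              have := h k (by omega)
              rwa [Function.update_of_ne hkt] at this
          · rintro ⟨h1, h2⟩ k hk
            by_cases hkt : k = t
            · subst hkt; rwa [Function.update_self]
            · rw [Function.update_of_ne hkt]
              have : (k:ℕ) ≠ s := fun h => hkt (Fin.ext h)
              exact h2 k (by omega)
        rw [this, Set.inter_assoc]
      rw [Finset.sum_congr rfl (fun v _ => by rw [hLsplit v])]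
      exact (partition_Lval P L hL t (LpastLT L l' s ∩ Apast A s a)
        ((mLpastLT hL l' s).inter (mApast hA s a)) f hfi).symm
end Aux4
section Aux5
set_option linter.unusedSectionVars false
set_option maxHeartbeats 1000000
variable {Ω : Type*} [MeasurableSpace Ω] {𝓛 : Type*} [MeasurableSpace 𝓛]
  [Fintype 𝓛] [Nonempty 𝓛] [MeasurableSingletonClass 𝓛]
variable {K : ℕ}

/-- Partition of a treatment-determined set into full (L,A)-atoms. -/
lemma partition_atoms (P : Measure Ω) [IsProbabilityMeasure P]
    (A : Fin K → Ω → Bool) (L : Fin K → Ω → 𝓛)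
    (hA : ∀ k, Measurable (A k)) (hL : ∀ k, Measurable (L k))
    (p : (Fin K → Bool) → Prop) [DecidablePred p] (S : Set Ω)
    (hS : ∀ ω, ω ∈ S ↔ p (fun k => A k ω))
    (f : Ω → ℝ)
    (hfi : ∀ b l, IntegrableOn f (LpastLT L l K ∩ Apast A K b) P) :
    ∫ ω in S, f ω ∂P
      = ∑ b ∈ Finset.univ.filter p, ∑ l : Fin K → 𝓛,
          ∫ ω in LpastLT L l K ∩ Apast A K b, f ω ∂P := by
  rw [← Finset.sum_product']
  refine setIntegral_partition P ((Finset.univ.filter p) ×ˢ (Finset.univ : Finset (Fin K → 𝓛)))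
    (fun q => LpastLT L q.2 K ∩ Apast A K q.1) S ?_ ?_ ?_ f ?_
  · exact fun q _ => (mLpastLT hL q.2 K).inter (mApast hA K q.1)
  · rintro ⟨b, l⟩ hq ⟨b', l'⟩ hq' hne
    refine Set.disjoint_left.mpr fun ω hω hω' => ?_
    apply hne
    have hb : b = b' := funext fun k => ((hω.2 k k.isLt).symm.trans (hω'.2 k k.isLt))
    have hl : l = l' := funext fun k => ((hω.1 k k.isLt).symm.trans (hω'.1 k k.isLt))
    rw [Prod.ext_iff]; exact ⟨hb, hl⟩
  · ext ω
    simp only [Set.mem_iUnion, Finset.mem_product, Finset.mem_filter, Finset.mem_univ, true_and,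
      and_true]
    constructor
    · rintro ⟨⟨b, l⟩, hb, hω⟩
      rw [hS]
      have : (fun k => A k ω) = b := funext fun k => hω.2 k k.isLt
      rw [this]; exact hb
    · intro hω
      refine ⟨⟨fun k => A k ω, fun k => L k ω⟩, (hS ω).mp hω, ?_, ?_⟩
      · intro k _; rfl
      · intro k _; rfl
  · exact fun q _ => hfi q.1 q.2

/-- Membership in the full atom forces the weights to be constant: `Wsw` version. -/
lemma Wsw_const_on_atom (P : Measure Ω) (A : Fin K → Ω → Bool) (L : Fin K → Ω → 𝓛)
    (b : Fin K → Bool) (l : Fin K → 𝓛) {ω : Ω}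
    (hω : ω ∈ LpastLT L l K ∩ Apast A K b) :
    Wsw P A L ω = ∏ k : Fin K,
      cP P {ω' | A k ω' = b k} (Apast A (k:ℕ) b) /
        cP P {ω' | A k ω' = b k} (Lpast L (k:ℕ) l ∩ Apast A (k:ℕ) b) := by
  have hAf : (fun j => A j ω) = b := funext fun j => hω.2 j j.isLt
  have hLf : (fun j => L j ω) = l := funext fun j => hω.1 j j.isLt
  unfold Wsw
  refine Finset.prod_congr rfl (fun k _ => ?_)
  rw [show A k ω = b k from hω.2 k k.isLt, hAf, hLf]

/-- Membership in the full atom forces the weights to be constant: `Wrsw` version. -/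
lemma Wrsw_const_on_atom (P : Measure Ω) (A : Fin K → Ω → Bool) (L : Fin K → Ω → 𝓛)
    (m : ℕ) (b : Fin K → Bool) (l : Fin K → 𝓛) {ω : Ω}
    (hω : ω ∈ LpastLT L l K ∩ Apast A K b) :
    Wrsw P A L m ω = ∏ k ∈ Finset.univ.filter (fun k : Fin K => K - m ≤ (k:ℕ)),
      cP P {ω' | A k ω' = b k} (Aseg A (K - m) (k:ℕ) b) /
        cP P {ω' | A k ω' = b k} (Lpast L (k:ℕ) l ∩ Apast A (k:ℕ) b) := by
  have hAf : (fun j => A j ω) = b := funext fun j => hω.2 j j.isLt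
  have hLf : (fun j => L j ω) = l := funext fun j => hω.1 j j.isLt
  unfold Wrsw
  refine Finset.prod_congr rfl (fun k _ => ?_)
  rw [show A k ω = b k from hω.2 k k.isLt, hAf, hLf]

/-- The trivial (denominator) step identity for the constant function 1. -/
lemma step_one (P : Measure Ω) [IsProbabilityMeasure P] {G F : Set Ω} (hF : 0 < P F) :
    ∫ _ω in F ∩ G, (1:ℝ) ∂P = cP P G F * ∫ _ω in F, (1:ℝ) ∂P := by
  rw [setIntegral_const, setIntegral_const, smul_eq_mul, smul_eq_mul, mul_one, mul_one,
    measureReal_def, measureReal_def, ← cP_mul hF, Set.inter_comm]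

end Aux5
section Aux6
set_option linter.unusedSectionVars false
set_option maxHeartbeats 1000000
variable {Ω : Type*} [MeasurableSpace Ω] {𝓛 : Type*} [MeasurableSpace 𝓛]
  [Fintype 𝓛] [Nonempty 𝓛] [MeasurableSingletonClass 𝓛]
variable {K : ℕ}

lemma filter_L_univ (d : 𝓛) :
    Finset.univ.filter (fun l : Fin K → 𝓛 => ∀ k : Fin K, K ≤ (k:ℕ) → l k = d)
      = Finset.univ :=
  Finset.filter_true_of_mem (fun l _ k hk => absurd k.isLt (by omega))

lemma filter_K_univ :
    Finset.univ.filter (fun k : Fin K => 0 ≤ (k:ℕ) ∧ (k:ℕ) < K) = Finset.univ :=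
  Finset.filter_true_of_mem (fun k _ => ⟨Nat.zero_le _, k.isLt⟩)

lemma filter_T_univ :
    Finset.univ.filter (fun k : Fin K => True ∧ (k:ℕ) < K) = Finset.univ :=
  Finset.filter_true_of_mem (fun k _ => ⟨trivial, k.isLt⟩)

lemma filter_R_eq (m : ℕ) :
    Finset.univ.filter (fun k : Fin K => K - m ≤ (k:ℕ))
      = Finset.univ.filter (fun k : Fin K => K - m ≤ (k:ℕ) ∧ (k:ℕ) < K) := by
  ext k
  simp only [Finset.mem_filter, Finset.mem_univ, true_and]
  exact ⟨fun h => ⟨h, k.isLt⟩, fun h => h.1⟩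

lemma eqOn_atom_mul (P : Measure Ω) (A : Fin K → Ω → Bool) (L : Fin K → Ω → 𝓛)
    (W : Ω → ℝ) (c : ℝ) (b : Fin K → Bool) (l : Fin K → 𝓛)
    (hW : ∀ ω ∈ LpastLT L l K ∩ Apast A K b, W ω = c)
    (g : Ω → ℝ) (gpot : (Fin K → Bool) → Ω → ℝ)
    (hcons : ∀ ω, (∀ k, A k ω = b k) → g ω = gpot b ω) :
    Set.EqOn (fun ω => W ω * g ω) (fun ω => c * gpot b ω) (LpastLT L l K ∩ Apast A K b) := by
  intro ω hω
  simp only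
  rw [hW ω hω, hcons ω (fun k => hω.2 k k.isLt)]

lemma integrableOn_atom_mul (P : Measure Ω) [IsProbabilityMeasure P]
    (A : Fin K → Ω → Bool) (L : Fin K → Ω → 𝓛)
    (hA : ∀ k, Measurable (A k)) (hL : ∀ k, Measurable (L k))
    (W : Ω → ℝ) (c : ℝ) (b : Fin K → Bool) (l : Fin K → 𝓛)
    (hW : ∀ ω ∈ LpastLT L l K ∩ Apast A K b, W ω = c)
    (g : Ω → ℝ) (gpot : (Fin K → Bool) → Ω → ℝ)
    (hcons : ∀ ω, (∀ k, A k ω = b k) → g ω = gpot b ω)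
    (hgi : Integrable (gpot b) P) :
    IntegrableOn (fun ω => W ω * g ω) (LpastLT L l K ∩ Apast A K b) P := by
  have hmeas : MeasurableSet (LpastLT L l K ∩ Apast A K b) :=
    (mLpastLT hL l K).inter (mApast hA K b)
  refine (((hgi.const_mul c).integrableOn
    (s := LpastLT L l K ∩ Apast A K b)).congr ?_)
  refine ((ae_restrict_iff' hmeas).mpr (ae_of_all _ ?_))
  intro ω hω
  exact (eqOn_atom_mul P A L W c b l hW g gpot hcons hω).symm

/-- Identification of the `Wsw`-weighted integrals. -/
lemma swCore (P : Measure Ω) [IsProbabilityMeasure P]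
    (A : Fin K → Ω → Bool) (L : Fin K → Ω → 𝓛)
    (hA : ∀ k, Measurable (A k)) (hL : ∀ k, Measurable (L k))
    (m : ℕ) (a : Bool)
    (g : Ω → ℝ) (gpot : (Fin K → Bool) → Ω → ℝ)
    (hgm : ∀ b, Measurable (gpot b)) (hgi : ∀ b, Integrable (gpot b) P)
    (hcons : ∀ b (ω : Ω), (∀ k, A k ω = b k) → g ω = gpot b ω)
    (hstepg : ∀ (b : Fin K → Bool) (t : Fin K) (l : Fin K → 𝓛),
      0 < P (Lpast L (t:ℕ) l ∩ Apast A (t:ℕ) b) →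
      ∫ ω in (Lpast L (t:ℕ) l ∩ Apast A (t:ℕ) b) ∩ {ω | A t ω = b t}, gpot b ω ∂P
        = cP P {ω | A t ω = b t} (Lpast L (t:ℕ) l ∩ Apast A (t:ℕ) b)
            * ∫ ω in Lpast L (t:ℕ) l ∩ Apast A (t:ℕ) b, gpot b ω ∂P)
    (hA3 : A3ok P A L) :
    ∫ ω in Etr A m a, Wsw P A L ω * g ω ∂P
      = ∑ b ∈ Finset.univ.filter
          (fun b : Fin K → Bool => ∀ k : Fin K, K - m ≤ (k:ℕ) → b k = a),
          (P (Apast A K b)).toReal * ∫ ω, gpot b ω ∂P := by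
  classical
  obtain ⟨d⟩ := ‹Nonempty 𝓛›
  -- weight constant value on atom
  set c : (Fin K → Bool) → (Fin K → 𝓛) → ℝ := fun b l => ∏ k : Fin K,
      cP P {ω' | A k ω' = b k} (Apast A (k:ℕ) b) /
        cP P {ω' | A k ω' = b k} (Lpast L (k:ℕ) l ∩ Apast A (k:ℕ) b) with hc
  rw [partition_atoms P A L hA hL
      (fun b => ∀ k : Fin K, K - m ≤ (k:ℕ) → b k = a) (Etr A m a)
      (fun ω => Iff.rfl) _
      (fun b l => integrableOn_atom_mul P A L hA hL (Wsw P A L) (c b l) b l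
        (fun ω hω => Wsw_const_on_atom P A L b l hω) g gpot (hcons b) (hgi b))]
  refine Finset.sum_congr rfl (fun b hb => ?_)
  have hinner : ∀ l : Fin K → 𝓛,
      ∫ ω in LpastLT L l K ∩ Apast A K b, Wsw P A L ω * g ω ∂P
        = (P (Apast A K b)).toReal
            * ((∏ k ∈ Finset.univ.filter (fun k : Fin K => 0 ≤ (k:ℕ) ∧ (k:ℕ) < K),
                cP P {ω | A k ω = b k} (Lpast L (k:ℕ) l ∩ Apast A (k:ℕ) b))⁻¹
              * ∫ ω in LpastLT L l K ∩ Apast A K b, gpot b ω ∂P) := by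
    intro l
    rw [setIntegral_congr_fun ((mLpastLT hL l K).inter (mApast hA K b))
      (eqOn_atom_mul P A L (Wsw P A L) (c b l) b l
        (fun ω hω => Wsw_const_on_atom P A L b l hω) g gpot (hcons b)),
      integral_const_mul]
    have hcval : c b l = (P (Apast A K b)).toReal
        * (∏ k ∈ Finset.univ.filter (fun k : Fin K => 0 ≤ (k:ℕ) ∧ (k:ℕ) < K),
            cP P {ω | A k ω = b k} (Lpast L (k:ℕ) l ∩ Apast A (k:ℕ) b))⁻¹ := by
      rw [hc]
      simp only
      rw [Finset.prod_div_distrib, div_eq_mul_inv, filter_K_univ]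
      congr 1
      rw [← telescope_sw P A hA b K (le_refl K), filter_T_univ]
    rw [hcval, mul_assoc]
  rw [Finset.sum_congr rfl (fun l _ => hinner l), ← Finset.mul_sum]
  congr 1
  have hgc := gcomp P A L hA hL b (gpot b) (hgm b) (hgi b) (hstepg b)
    (fun t l hpos => hA3 t (b t) l b hpos) d 0 K (Nat.zero_le K) (le_refl K)
  rw [filter_L_univ d] at hgc
  rw [hgc, Apast_zero, setIntegral_univ]

/-- Identification of the `Wrsw`-weighted integrals. -/
lemma rswCore (P : Measure Ω) [IsProbabilityMeasure P]
    (A : Fin K → Ω → Bool) (L : Fin K → Ω → 𝓛)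
    (hA : ∀ k, Measurable (A k)) (hL : ∀ k, Measurable (L k))
    (m : ℕ) (hmK : m ≤ K) (a : Bool)
    (g : Ω → ℝ) (gpot : (Fin K → Bool) → Ω → ℝ)
    (hgm : ∀ b, Measurable (gpot b)) (hgi : ∀ b, Integrable (gpot b) P)
    (hcons : ∀ b (ω : Ω), (∀ k, A k ω = b k) → g ω = gpot b ω)
    (hstepg : ∀ (b : Fin K → Bool) (t : Fin K) (l : Fin K → 𝓛),
      0 < P (Lpast L (t:ℕ) l ∩ Apast A (t:ℕ) b) →
      ∫ ω in (Lpast L (t:ℕ) l ∩ Apast A (t:ℕ) b) ∩ {ω | A t ω = b t}, gpot b ω ∂P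
        = cP P {ω | A t ω = b t} (Lpast L (t:ℕ) l ∩ Apast A (t:ℕ) b)
            * ∫ ω in Lpast L (t:ℕ) l ∩ Apast A (t:ℕ) b, gpot b ω ∂P)
    (hA3 : A3ok P A L) :
    ∫ ω in Etr A m a, Wrsw P A L m ω * g ω ∂P
      = ∑ b ∈ Finset.univ.filter
          (fun b : Fin K → Bool => ∀ k : Fin K, K - m ≤ (k:ℕ) → b k = a),
          (P (Aseg A (K - m) K b)).toReal * ∫ ω in Apast A (K - m) b, gpot b ω ∂P := by
  classical
  obtain ⟨d⟩ := ‹Nonempty 𝓛›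
  set c : (Fin K → Bool) → (Fin K → 𝓛) → ℝ := fun b l =>
      ∏ k ∈ Finset.univ.filter (fun k : Fin K => K - m ≤ (k:ℕ)),
      cP P {ω' | A k ω' = b k} (Aseg A (K - m) (k:ℕ) b) /
        cP P {ω' | A k ω' = b k} (Lpast L (k:ℕ) l ∩ Apast A (k:ℕ) b) with hc
  rw [partition_atoms P A L hA hL
      (fun b => ∀ k : Fin K, K - m ≤ (k:ℕ) → b k = a) (Etr A m a)
      (fun ω => Iff.rfl) _
      (fun b l => integrableOn_atom_mul P A L hA hL (Wrsw P A L m) (c b l) b l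
        (fun ω hω => Wrsw_const_on_atom P A L m b l hω) g gpot (hcons b) (hgi b))]
  refine Finset.sum_congr rfl (fun b hb => ?_)
  have hinner : ∀ l : Fin K → 𝓛,
      ∫ ω in LpastLT L l K ∩ Apast A K b, Wrsw P A L m ω * g ω ∂P
        = (P (Aseg A (K - m) K b)).toReal
            * ((∏ k ∈ Finset.univ.filter (fun k : Fin K => K - m ≤ (k:ℕ) ∧ (k:ℕ) < K),
                cP P {ω | A k ω = b k} (Lpast L (k:ℕ) l ∩ Apast A (k:ℕ) b))⁻¹
              * ∫ ω in LpastLT L l K ∩ Apast A K b, gpot b ω ∂P) := by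
    intro l
    rw [setIntegral_congr_fun ((mLpastLT hL l K).inter (mApast hA K b))
      (eqOn_atom_mul P A L (Wrsw P A L m) (c b l) b l
        (fun ω hω => Wrsw_const_on_atom P A L m b l hω) g gpot (hcons b)),
      integral_const_mul]
    have hcval : c b l = (P (Aseg A (K - m) K b)).toReal
        * (∏ k ∈ Finset.univ.filter (fun k : Fin K => K - m ≤ (k:ℕ) ∧ (k:ℕ) < K),
            cP P {ω | A k ω = b k} (Lpast L (k:ℕ) l ∩ Apast A (k:ℕ) b))⁻¹ := by
      rw [hc]
      simp only
      rw [Finset.prod_div_distrib, div_eq_mul_inv, filter_R_eq m]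
      congr 1
      rw [← telescope_rsw P A hA b (K - m) K (by omega) (le_refl K)]
    rw [hcval, mul_assoc]
  rw [Finset.sum_congr rfl (fun l _ => hinner l), ← Finset.mul_sum]
  congr 1
  have hgc := gcomp P A L hA hL b (gpot b) (hgm b) (hgi b) (hstepg b)
    (fun t l hpos => hA3 t (b t) l b hpos) d (K - m) K (by omega) (le_refl K)
  rw [filter_L_univ d] at hgc
  rw [hgc]
end Aux6
section Aux7
set_option linter.unusedSectionVars false
set_option maxHeartbeats 1000000
variable {Ω : Type*} [MeasurableSpace Ω] {𝓛 : Type*} [MeasurableSpace 𝓛]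
  [Fintype 𝓛] [Nonempty 𝓛] [MeasurableSingletonClass 𝓛]
variable {K : ℕ}

lemma Apast_congr (A : Fin K → Ω → Bool) {b b' : Fin K → Bool} (t : ℕ)
    (h : ∀ k : Fin K, (k:ℕ) < t → b k = b' k) : Apast A t b = Apast A t b' := by
  ext ω; constructor <;> intro hω k hk
  · rw [← h k hk]; exact hω k hk
  · rw [h k hk]; exact hω k hk

lemma partition_Apast_int (P : Measure Ω) [IsProbabilityMeasure P]
    (A : Fin K → Ω → Bool) (hA : ∀ k, Measurable (A k)) (s0 : ℕ)
    (p : (Fin K → Bool) → Prop) [DecidablePred p] (S : Set Ω)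
    (hdisj : ∀ b b', p b → p b' → b ≠ b' → ∃ k : Fin K, (k:ℕ) < s0 ∧ b k ≠ b' k)
    (hcover : ∀ ω ∈ S, ∃ b, p b ∧ ∀ k : Fin K, (k:ℕ) < s0 → A k ω = b k)
    (hsub : ∀ b, p b → Apast A s0 b ⊆ S)
    (f : Ω → ℝ) (hfi : Integrable f P) :
    ∫ ω in S, f ω ∂P = ∑ b ∈ Finset.univ.filter p, ∫ ω in Apast A s0 b, f ω ∂P := by
  refine setIntegral_partition P _ _ S ?_ ?_ ?_ f ?_
  · exact fun b _ => mApast hA s0 b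
  · intro b hb b' hb' hne
    simp only [Finset.coe_filter, Finset.mem_univ, true_and, Set.mem_setOf_eq] at hb hb'
    obtain ⟨k, hk, hkne⟩ := hdisj b b' hb hb' hne
    exact Set.disjoint_left.mpr fun ω hω hω' => hkne ((hω k hk).symm.trans (hω' k hk))
  · ext ω
    simp only [Set.mem_iUnion, Finset.mem_filter, Finset.mem_univ, true_and]
    constructor
    · rintro ⟨b, hb, hω⟩; exact hsub b hb hω
    · intro hω
      obtain ⟨b, hb, hbω⟩ := hcover ω hω
      exact ⟨b, hb, hbω⟩
  · exact fun b _ => hfi.integrableOn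

lemma partition_Apast_meas (P : Measure Ω) [IsProbabilityMeasure P]
    (A : Fin K → Ω → Bool) (hA : ∀ k, Measurable (A k)) (s0 : ℕ)
    (p : (Fin K → Bool) → Prop) [DecidablePred p] (S : Set Ω)
    (hdisj : ∀ b b', p b → p b' → b ≠ b' → ∃ k : Fin K, (k:ℕ) < s0 ∧ b k ≠ b' k)
    (hcover : ∀ ω ∈ S, ∃ b, p b ∧ ∀ k : Fin K, (k:ℕ) < s0 → A k ω = b k)
    (hsub : ∀ b, p b → Apast A s0 b ⊆ S) :
    (P S).toReal = ∑ b ∈ Finset.univ.filter p, (P (Apast A s0 b)).toReal := by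
  refine measure_toReal_partition P _ _ S ?_ ?_ ?_
  · exact fun b _ => mApast hA s0 b
  · intro b hb b' hb' hne
    simp only [Finset.coe_filter, Finset.mem_univ, true_and, Set.mem_setOf_eq] at hb hb'
    obtain ⟨k, hk, hkne⟩ := hdisj b b' hb hb' hne
    exact Set.disjoint_left.mpr fun ω hω hω' => hkne ((hω k hk).symm.trans (hω' k hk))
  · ext ω
    simp only [Set.mem_iUnion, Finset.mem_filter, Finset.mem_univ, true_and]
    constructor
    · rintro ⟨b, hb, hω⟩; exact hsub b hb hω
    · intro hω
      obtain ⟨b, hb, hbω⟩ := hcover ω hω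
      exact ⟨b, hb, hbω⟩

lemma rev_ge_iff {m : ℕ} (hm1 : 1 ≤ m) (hmK : m ≤ K) (j : Fin K) :
    K - m ≤ (rev j : ℕ) ↔ (j:ℕ) < m := by
  have := j.isLt
  simp only [rev]
  omega

lemma rev_inj {j j' : Fin K} (h : rev j = rev j') : j = j' := by
  have h1 := j.isLt
  have h2 := j'.isLt
  have h3 : (rev j : ℕ) = (rev j' : ℕ) := congrArg Fin.val h
  simp only [rev] at h3
  exact Fin.ext (by omega)

lemma sum_sign_zero_iff {s : Finset (Fin K)} {x c : Fin K → ℝ}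
    (hc : ∀ j ∈ s, 0 < c j)
    (hsign : (∀ j, 0 ≤ x j) ∨ (∀ j, x j ≤ 0)) :
    (∑ j ∈ s, x j * c j = 0) ↔ ∀ j ∈ s, x j = 0 := by
  rcases hsign with hpos | hneg
  · rw [Finset.sum_eq_zero_iff_of_nonneg
      (fun j hj => mul_nonneg (hpos j) (hc j hj).le)]
    constructor
    · intro h j hj
      rcases mul_eq_zero.mp (h j hj) with h' | h'
      · exact h'
      · exact absurd h' (hc j hj).ne'
    · intro h j hj; rw [h j hj, zero_mul]
  · rw [Finset.sum_eq_zero_iff_of_nonpos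
      (fun j hj => mul_nonpos_of_nonpos_of_nonneg (hneg j) (hc j hj).le)]
    constructor
    · intro h j hj
      rcases mul_eq_zero.mp (h j hj) with h' | h'
      · exact h'
      · exact absurd h' (hc j hj).ne'
    · intro h j hj; rw [h j hj, zero_mul]

end Aux7
section Aux8
set_option linter.unusedSectionVars false
set_option maxHeartbeats 1000000
variable {Ω : Type*} [MeasurableSpace Ω] {𝓛 : Type*} [MeasurableSpace 𝓛]
  [Fintype 𝓛] [Nonempty 𝓛] [MeasurableSingletonClass 𝓛]
variable {K : ℕ}

lemma thetaK_val (P : Measure Ω) [IsProbabilityMeasure P]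
    (Ypot : (Fin K → Bool) → Ω → ℝ) (ψ0 : ℝ) (ψ : Fin K → ℝ)
    (hMSM : MSMeq P Ypot ψ0 ψ) :
    θKfull P Ypot = ∑ j : Fin K, ψ j := by
  rw [θKfull, hMSM (fun _ => true), hMSM (fun _ => false)]
  simp

/-- The step identity needed for `Ypot b`, derived from (A2). -/
lemma hstepY_of_A2 (P : Measure Ω) [IsProbabilityMeasure P]
    (A : Fin K → Ω → Bool) (L : Fin K → Ω → 𝓛)
    (hA : ∀ k, Measurable (A k))
    (Ypot : (Fin K → Bool) → Ω → ℝ) (hYpm : ∀ a, Measurable (Ypot a))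
    (hA2 : A2ok P A L Ypot) :
    ∀ (b : Fin K → Bool) (t : Fin K) (l : Fin K → 𝓛),
      0 < P (Lpast L (t:ℕ) l ∩ Apast A (t:ℕ) b) →
      ∫ ω in (Lpast L (t:ℕ) l ∩ Apast A (t:ℕ) b) ∩ {ω | A t ω = b t}, Ypot b ω ∂P
        = cP P {ω | A t ω = b t} (Lpast L (t:ℕ) l ∩ Apast A (t:ℕ) b)
            * ∫ ω in Lpast L (t:ℕ) l ∩ Apast A (t:ℕ) b, Ypot b ω ∂P := by
  intro b t l hpos
  exact step_factor P (hYpm b) (mEq (hA t) (b t)) hpos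
    (fun B hB => hA2 t b B hB (b t) l b hpos)

/-- Partition of `Etr` by full treatment histories, measure version. -/
lemma sum_Apast_eq_Etr (P : Measure Ω) [IsProbabilityMeasure P]
    (A : Fin K → Ω → Bool) (hA : ∀ k, Measurable (A k)) (m : ℕ) (a : Bool) :
    ∑ b ∈ Finset.univ.filter
        (fun b : Fin K → Bool => ∀ k : Fin K, K - m ≤ (k:ℕ) → b k = a),
      (P (Apast A K b)).toReal = (P (Etr A m a)).toReal := by
  refine (partition_Apast_meas P A hA K _ (Etr A m a) ?_ ?_ ?_).symm
  · intro b b' _ _ hne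
    by_contra hc
    push_neg at hc
    exact hne (funext fun k => hc k k.isLt)
  · intro ω hω
    exact ⟨fun k => A k ω, fun k hk => hω k hk, fun k _ => rfl⟩
  · intro b hb ω hω k hk
    rw [hω k k.isLt]; exact hb k hk

/-- Partition of `{A (rev j) = true} ∩ Etr` by full treatment histories. -/
lemma sum_Apast_eq_inter (P : Measure Ω) [IsProbabilityMeasure P]
    (A : Fin K → Ω → Bool) (hA : ∀ k, Measurable (A k)) (m : ℕ) (a : Bool) (j : Fin K) :
    ∑ b ∈ Finset.univ.filter
        (fun b : Fin K → Bool => (∀ k : Fin K, K - m ≤ (k:ℕ) → b k = a) ∧ b (rev j) = true),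
      (P (Apast A K b)).toReal
      = (P ({ω | A (rev j) ω = true} ∩ Etr A m a)).toReal := by
  refine (partition_Apast_meas P A hA K _ ({ω | A (rev j) ω = true} ∩ Etr A m a) ?_ ?_ ?_).symm
  · intro b b' _ _ hne
    by_contra hc
    push_neg at hc
    exact hne (funext fun k => hc k k.isLt)
  · intro ω hω
    exact ⟨fun k => A k ω, ⟨fun k hk => hω.2 k hk, hω.1⟩, fun k _ => rfl⟩
  · intro b hb ω hω
    constructor
    · show A (rev j) ω = true
      rw [hω (rev j) (rev j).isLt]; exact hb.2
    · intro k hk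
      rw [hω k k.isLt]; exact hb.1 k hk

lemma thetaSw_val (P : Measure Ω) [IsProbabilityMeasure P]
    {m : ℕ} (hm1 : 1 ≤ m) (hmK : m ≤ K)
    (A : Fin K → Ω → Bool) (L : Fin K → Ω → 𝓛)
    (hA : ∀ k, Measurable (A k)) (hL : ∀ k, Measurable (L k))
    (Y : Ω → ℝ)
    (Ypot : (Fin K → Bool) → Ω → ℝ)
    (hYpm : ∀ a, Measurable (Ypot a)) (hYpi : ∀ a, Integrable (Ypot a) P)
    (hpos1 : 0 < P (Etr A m true)) (hpos0 : 0 < P (Etr A m false))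
    (hA1 : A1ok A Y Ypot) (hA2 : A2ok P A L Ypot) (hA3 : A3ok P A L)
    (ψ0 : ℝ) (ψ : Fin K → ℝ) (hMSM : MSMeq P Ypot ψ0 ψ) :
    θW P A m (Wsw P A L) Y
      = ∑ j ∈ Finset.univ.filter (fun j : Fin K => (j:ℕ) < m), ψ j
        + ∑ j ∈ Finset.univ.filter (fun j : Fin K => m ≤ (j:ℕ)), ψ j * qcoef P A m j := by
  classical
  -- numerator identity
  have hNum : ∀ a : Bool, ∫ ω in Etr A m a, Wsw P A L ω * Y ω ∂P
      = ψ0 * (P (Etr A m a)).toReal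
        + ∑ j : Fin K, ψ j * (P ({ω | A (rev j) ω = true} ∩ Etr A m a)).toReal := by
    intro a
    rw [swCore P A L hA hL m a Y Ypot hYpm hYpi (fun b ω h => hA1 b ω h)
      (hstepY_of_A2 P A L hA Ypot hYpm hA2) hA3]
    have hexp : ∀ b : Fin K → Bool, (P (Apast A K b)).toReal * ∫ ω, Ypot b ω ∂P
        = (P (Apast A K b)).toReal * ψ0
          + ∑ j : Fin K, ψ j * ((P (Apast A K b)).toReal
              * (if b (rev j) = true then (1:ℝ) else 0)) := by
      intro b
      rw [hMSM b, mul_add, Finset.mul_sum]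
      congr 1
      refine Finset.sum_congr rfl (fun j _ => by ring)
    rw [Finset.sum_congr rfl (fun b _ => hexp b), Finset.sum_add_distrib]
    congr 1
    · rw [← Finset.sum_mul, sum_Apast_eq_Etr P A hA m a, mul_comm]
    · rw [Finset.sum_comm]
      refine Finset.sum_congr rfl (fun j _ => ?_)
      rw [← Finset.mul_sum]
      congr 1
      rw [← sum_Apast_eq_inter P A hA m a j]
      have hff : Finset.univ.filter
          (fun b : Fin K → Bool => (∀ k : Fin K, K - m ≤ (k:ℕ) → b k = a) ∧ b (rev j) = true)
          = (Finset.univ.filter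
              (fun b : Fin K → Bool => ∀ k : Fin K, K - m ≤ (k:ℕ) → b k = a)).filter
              (fun b => b (rev j) = true) := by
        rw [Finset.filter_filter]
      conv_rhs => rw [hff, Finset.sum_filter]
      refine Finset.sum_congr rfl (fun b _ => ?_)
      by_cases hbv : b (rev j) = true
      · rw [if_pos hbv, if_pos hbv, mul_one]
      · rw [if_neg hbv, if_neg hbv, mul_zero]
  -- denominator identity
  have hDen : ∀ a : Bool, ∫ ω in Etr A m a, Wsw P A L ω ∂P = (P (Etr A m a)).toReal := by
    intro a
    have h1 : ∫ ω in Etr A m a, Wsw P A L ω ∂P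
        = ∫ ω in Etr A m a, Wsw P A L ω * (fun (_ : Ω) => (1:ℝ)) ω ∂P := by
      simp
    rw [h1, swCore P A L hA hL m a (fun _ => (1:ℝ)) (fun _ _ => (1:ℝ))
      (fun _ => measurable_const) (fun _ => integrable_const 1) (fun _ _ _ => rfl)
      (fun b t l hpos => step_one P hpos) hA3]
    rw [← sum_Apast_eq_Etr P A hA m a]
    refine Finset.sum_congr rfl (fun b _ => ?_)
    simp
  -- conditional probabilities for j < m
  have hcP1 : ∀ j : Fin K, (j:ℕ) < m →
      cP P {ω | A (rev j) ω = true} (Etr A m true) = 1 := by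
    intro j hj
    have hset : {ω | A (rev j) ω = true} ∩ Etr A m true = Etr A m true := by
      apply Set.inter_eq_self_of_subset_right
      intro ω hω
      exact hω (rev j) ((rev_ge_iff hm1 hmK j).mpr hj)
    rw [cP, hset, div_self (toReal_ne_zero_of_pos hpos1)]
  have hcP0 : ∀ j : Fin K, (j:ℕ) < m →
      cP P {ω | A (rev j) ω = true} (Etr A m false) = 0 := by
    intro j hj
    have hset : {ω | A (rev j) ω = true} ∩ Etr A m false = ∅ := by
      ext ω
      simp only [Set.mem_inter_iff, Set.mem_setOf_eq, Set.mem_empty_iff_false, iff_false,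
        not_and]
      intro h1 h2
      have := h2 (rev j) ((rev_ge_iff hm1 hmK j).mpr hj)
      rw [h1] at this
      exact Bool.true_eq_false ▸ (by simp at this)
    rw [cP, hset]
    simp
  -- put everything together
  rw [θW, hNum true, hNum false, hDen true, hDen false]
  have hP1 : (P (Etr A m true)).toReal ≠ 0 := toReal_ne_zero_of_pos hpos1
  have hP0 : (P (Etr A m false)).toReal ≠ 0 := toReal_ne_zero_of_pos hpos0
  have hdiv : ∀ a : Bool, 0 < P (Etr A m a) →
      (ψ0 * (P (Etr A m a)).toReal
        + ∑ j : Fin K, ψ j * (P ({ω | A (rev j) ω = true} ∩ Etr A m a)).toReal)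
          / (P (Etr A m a)).toReal
      = ψ0 + ∑ j : Fin K, ψ j * cP P {ω | A (rev j) ω = true} (Etr A m a) := by
    intro a hpos
    rw [add_div, mul_div_assoc, div_self (toReal_ne_zero_of_pos hpos), mul_one,
      Finset.sum_div]
    congr 1
    refine Finset.sum_congr rfl (fun j _ => ?_)
    rw [mul_div_assoc, cP]
  rw [hdiv true hpos1, hdiv false hpos0]
  have hsplit : ∀ g : Fin K → ℝ, ∑ j : Fin K, g j
      = ∑ j ∈ Finset.univ.filter (fun j : Fin K => (j:ℕ) < m), g j
        + ∑ j ∈ Finset.univ.filter (fun j : Fin K => ¬ ((j:ℕ) < m)), g j :=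
    fun g => (Finset.sum_filter_add_sum_filter_not Finset.univ _ g).symm
  have hfeq : Finset.univ.filter (fun j : Fin K => ¬ ((j:ℕ) < m))
      = Finset.univ.filter (fun j : Fin K => m ≤ (j:ℕ)) := by
    ext j; simp [not_lt]
  rw [hsplit (fun j => ψ j * cP P {ω | A (rev j) ω = true} (Etr A m true)),
    hsplit (fun j => ψ j * cP P {ω | A (rev j) ω = true} (Etr A m false)), hfeq]
  have hlt1 : ∑ j ∈ Finset.univ.filter (fun j : Fin K => (j:ℕ) < m),
      ψ j * cP P {ω | A (rev j) ω = true} (Etr A m true)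
      = ∑ j ∈ Finset.univ.filter (fun j : Fin K => (j:ℕ) < m), ψ j := by
    refine Finset.sum_congr rfl (fun j hj => ?_)
    simp only [Finset.mem_filter, Finset.mem_univ, true_and] at hj
    rw [hcP1 j hj, mul_one]
  have hlt0 : ∑ j ∈ Finset.univ.filter (fun j : Fin K => (j:ℕ) < m),
      ψ j * cP P {ω | A (rev j) ω = true} (Etr A m false)
      = 0 := by
    refine Finset.sum_eq_zero (fun j hj => ?_)
    simp only [Finset.mem_filter, Finset.mem_univ, true_and] at hj
    rw [hcP0 j hj, mul_zero]
  rw [hlt1, hlt0]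
  have hq : ∑ j ∈ Finset.univ.filter (fun j : Fin K => m ≤ (j:ℕ)),
        ψ j * cP P {ω | A (rev j) ω = true} (Etr A m true)
      - ∑ j ∈ Finset.univ.filter (fun j : Fin K => m ≤ (j:ℕ)),
        ψ j * cP P {ω | A (rev j) ω = true} (Etr A m false)
      = ∑ j ∈ Finset.univ.filter (fun j : Fin K => m ≤ (j:ℕ)), ψ j * qcoef P A m j := by
    rw [← Finset.sum_sub_distrib]
    refine Finset.sum_congr rfl (fun j _ => ?_)
    rw [qcoef, mul_sub]
  ring_nf
  ring_nf at hq
  linarith [hq]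

end Aux8
section Aux9
set_option linter.unusedSectionVars false
set_option maxHeartbeats 1000000
variable {Ω : Type*} [MeasurableSpace Ω] {𝓛 : Type*} [MeasurableSpace 𝓛]
  [Fintype 𝓛] [Nonempty 𝓛] [MeasurableSingletonClass 𝓛]
variable {K : ℕ}

lemma thetaRsw_val (P : Measure Ω) [IsProbabilityMeasure P]
    {m : ℕ} (hm1 : 1 ≤ m) (hmK : m ≤ K)
    (A : Fin K → Ω → Bool) (L : Fin K → Ω → 𝓛)
    (hA : ∀ k, Measurable (A k)) (hL : ∀ k, Measurable (L k))
    (Y : Ω → ℝ)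
    (Ypot : (Fin K → Bool) → Ω → ℝ)
    (hYpm : ∀ a, Measurable (Ypot a)) (hYpi : ∀ a, Integrable (Ypot a) P)
    (hpos1 : 0 < P (Etr A m true)) (hpos0 : 0 < P (Etr A m false))
    (hA1 : A1ok A Y Ypot) (hA2 : A2ok P A L Ypot) (hA3 : A3ok P A L)
    (ψ0 : ℝ) (ψ : Fin K → ℝ) (hMSM : MSMeq P Ypot ψ0 ψ)
    (hA5 : A5ok P A Ypot m) :
    θW P A m (Wrsw P A L m) Y
      = ∑ j ∈ Finset.univ.filter (fun j : Fin K => (j:ℕ) < m), ψ j := by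
  classical
  -- common combinatorial facts
  have hdisjT : ∀ (a : Bool) (b b' : Fin K → Bool),
      (∀ k : Fin K, K - m ≤ (k:ℕ) → b k = a) → (∀ k : Fin K, K - m ≤ (k:ℕ) → b' k = a) →
      b ≠ b' → ∃ k : Fin K, (k:ℕ) < K - m ∧ b k ≠ b' k := by
    intro a b b' hb hb' hne
    by_contra hc
    push_neg at hc
    refine hne (funext fun k => ?_)
    rcases Nat.lt_or_ge (k:ℕ) (K - m) with h | h
    · exact hc k h
    · rw [hb k h, hb' k h]
  have hcoverT : ∀ (a : Bool) (ω : Ω), ∃ b : Fin K → Bool,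
      (∀ k : Fin K, K - m ≤ (k:ℕ) → b k = a) ∧
        ∀ k : Fin K, (k:ℕ) < K - m → A k ω = b k := by
    intro a ω
    refine ⟨fun k => if K - m ≤ (k:ℕ) then a else A k ω, fun k hk => if_pos hk,
      fun k hk => (if_neg (by omega)).symm⟩
  have hAsegEq : ∀ (a : Bool) (b : Fin K → Bool),
      (∀ k : Fin K, K - m ≤ (k:ℕ) → b k = a) → Aseg A (K - m) K b = Etr A m a := by
    intro a b hb
    ext ω
    constructor
    · intro hω k hk
      rw [← hb k hk]; exact hω k hk k.isLt
    · intro hω k hk1 _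
      rw [hb k hk1]; exact hω k hk1
  -- the numerator of θW
  have hNumR : ∀ a : Bool, ∫ ω in Etr A m a, Wrsw P A L m ω * Y ω ∂P
      = (P (Etr A m a)).toReal * ∑ b ∈ Finset.univ.filter
          (fun b : Fin K → Bool => ∀ k : Fin K, K - m ≤ (k:ℕ) → b k = a),
            ∫ ω in Apast A (K - m) b, Ypot b ω ∂P := by
    intro a
    rw [rswCore P A L hA hL m hmK a Y Ypot hYpm hYpi (fun b ω h => hA1 b ω h)
      (hstepY_of_A2 P A L hA Ypot hYpm hA2) hA3, Finset.mul_sum]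
    refine Finset.sum_congr rfl (fun b hb => ?_)
    simp only [Finset.mem_filter, Finset.mem_univ, true_and] at hb
    rw [hAsegEq a b hb]
  -- the denominator of θW
  have hOne : ∀ a : Bool, ∑ b ∈ Finset.univ.filter
      (fun b : Fin K → Bool => ∀ k : Fin K, K - m ≤ (k:ℕ) → b k = a),
        (P (Apast A (K - m) b)).toReal = 1 := by
    intro a
    have := partition_Apast_meas P A hA (K - m)
      (fun b : Fin K → Bool => ∀ k : Fin K, K - m ≤ (k:ℕ) → b k = a) Set.univ
      (fun b b' hb hb' hne => hdisjT a b b' hb hb' hne)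
      (fun ω _ => hcoverT a ω)
      (fun b _ => Set.subset_univ _)
    rw [measure_univ] at this
    simp only [ENNReal.toReal_one] at this
    exact this.symm
  have hDenR : ∀ a : Bool, ∫ ω in Etr A m a, Wrsw P A L m ω ∂P
      = (P (Etr A m a)).toReal := by
    intro a
    have h1 : ∫ ω in Etr A m a, Wrsw P A L m ω ∂P
        = ∫ ω in Etr A m a, Wrsw P A L m ω * (fun (_ : Ω) => (1:ℝ)) ω ∂P := by
      simp
    rw [h1, rswCore P A L hA hL m hmK a (fun _ => (1:ℝ)) (fun _ _ => (1:ℝ))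
      (fun _ => measurable_const) (fun _ => integrable_const 1) (fun _ _ _ => rfl)
      (fun b t l hpos => step_one P hpos) hA3]
    have h2 : ∀ b ∈ Finset.univ.filter
        (fun b : Fin K → Bool => ∀ k : Fin K, K - m ≤ (k:ℕ) → b k = a),
        (P (Aseg A (K - m) K b)).toReal * ∫ (_ω : Ω) in Apast A (K - m) b, (1:ℝ) ∂P
          = (P (Etr A m a)).toReal * (P (Apast A (K - m) b)).toReal := by
      intro b hb
      simp only [Finset.mem_filter, Finset.mem_univ, true_and] at hb
      rw [hAsegEq a b hb, setIntegral_const, smul_eq_mul, mul_one, measureReal_def]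
    rw [Finset.sum_congr rfl h2, ← Finset.mul_sum, hOne a, mul_one]
  -- choose conditional MSM coefficients
  have hchoice : ∀ p : Fin K → Bool, ∃ (φ0 : ℝ) (φ : Fin K → ℝ), ∀ aa : Fin K → Bool,
      ∫ ω in Apast A (K - m) p, Ypot aa ω ∂P
        = (P (Apast A (K - m) p)).toReal
            * (φ0 + ∑ j : Fin K, φ j * (if aa (rev j) = true then (1:ℝ) else 0)) := by
    intro p
    by_cases h : 0 < P (Apast A (K - m) p)
    · obtain ⟨φ0, φ, hφ⟩ := hA5 p h
      refine ⟨φ0, φ, fun aa => ?_⟩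
      have := hφ aa
      rw [div_eq_iff (toReal_ne_zero_of_pos h)] at this
      rw [this]; ring
    · have h0 : P (Apast A (K - m) p) = 0 := by
        by_contra hh; exact h (pos_iff_ne_zero.mpr hh)
      refine ⟨0, fun _ => 0, fun aa => ?_⟩
      rw [setIntegral_null h0, h0]
      simp
  choose Φ0 Φ hI1 using hchoice
  -- total expectation identity
  have hC : ∀ aa : Fin K → Bool,
      ψ0 + ∑ j : Fin K, ψ j * (if aa (rev j) = true then (1:ℝ) else 0)
        = (∑ p ∈ Finset.univ.filter
            (fun b : Fin K → Bool => ∀ k : Fin K, K - m ≤ (k:ℕ) → b k = false),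
              (P (Apast A (K - m) p)).toReal * Φ0 p)
          + ∑ j : Fin K, (∑ p ∈ Finset.univ.filter
              (fun b : Fin K → Bool => ∀ k : Fin K, K - m ≤ (k:ℕ) → b k = false),
                (P (Apast A (K - m) p)).toReal * Φ p j)
              * (if aa (rev j) = true then (1:ℝ) else 0) := by
    intro aa
    have hint : ∫ ω, Ypot aa ω ∂P
        = ∑ p ∈ Finset.univ.filter
            (fun b : Fin K → Bool => ∀ k : Fin K, K - m ≤ (k:ℕ) → b k = false),
            ∫ ω in Apast A (K - m) p, Ypot aa ω ∂P := by
      rw [← setIntegral_univ]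
      exact partition_Apast_int P A hA (K - m) _ Set.univ
        (fun b b' hb hb' hne => hdisjT false b b' hb hb' hne)
        (fun ω _ => hcoverT false ω)
        (fun b _ => Set.subset_univ _) (Ypot aa) (hYpi aa)
    rw [← hMSM aa, hint, Finset.sum_congr rfl (fun p _ => hI1 p aa)]
    have hsplit : ∀ p : Fin K → Bool,
        (P (Apast A (K - m) p)).toReal
          * (Φ0 p + ∑ j : Fin K, Φ p j * (if aa (rev j) = true then (1:ℝ) else 0))
        = (P (Apast A (K - m) p)).toReal * Φ0 p
          + ∑ j : Fin K, ((P (Apast A (K - m) p)).toReal * Φ p j)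
              * (if aa (rev j) = true then (1:ℝ) else 0) := by
      intro p
      rw [mul_add, Finset.mul_sum]
      congr 1
      exact Finset.sum_congr rfl (fun j _ => by ring)
    rw [Finset.sum_congr rfl (fun p _ => hsplit p), Finset.sum_add_distrib]
    congr 1
    rw [Finset.sum_comm]
    exact Finset.sum_congr rfl (fun j _ => (Finset.sum_mul _ _ _).symm)
  -- extract coefficients
  have h0c := hC (fun _ => false)
  simp only [Bool.false_eq_true, if_false, mul_zero, Finset.sum_const_zero, add_zero] at h0c
  have hCj : ∀ j : Fin K,
      (∑ p ∈ Finset.univ.filter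
          (fun b : Fin K → Bool => ∀ k : Fin K, K - m ≤ (k:ℕ) → b k = false),
          (P (Apast A (K - m) p)).toReal * Φ p j) = ψ j := by
    intro j
    have hj := hC (fun k => decide (k = rev j))
    have hiff : ∀ j' : Fin K,
        (if (decide ((rev j') = rev j)) = true then (1:ℝ) else 0)
          = (if j' = j then (1:ℝ) else 0) := by
      intro j'
      by_cases h : j' = j
      · subst h; simp
      · have : rev j' ≠ rev j := fun hc => h (rev_inj hc)
        simp [this, h]
    simp only [hiff] at hj
    have hsum1 : ∑ j' : Fin K, ψ j' * (if j' = j then (1:ℝ) else 0) = ψ j := by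
      simp [mul_ite, mul_one, mul_zero]
    have hsum2 : ∑ j' : Fin K, (∑ p ∈ Finset.univ.filter
        (fun b : Fin K → Bool => ∀ k : Fin K, K - m ≤ (k:ℕ) → b k = false),
          (P (Apast A (K - m) p)).toReal * Φ p j')
        * (if j' = j then (1:ℝ) else 0)
        = ∑ p ∈ Finset.univ.filter
            (fun b : Fin K → Bool => ∀ k : Fin K, K - m ≤ (k:ℕ) → b k = false),
            (P (Apast A (K - m) p)).toReal * Φ p j := by
      simp [mul_ite, mul_one, mul_zero]
    rw [hsum1, hsum2] at hj
    linarith [h0c, hj]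
  -- reindex the b-sums over the canonical prefix representatives
  set extB : (Fin K → Bool) → Bool → (Fin K → Bool) :=
    fun b a k => if K - m ≤ (k:ℕ) then a else b k with hextB
  have hSig : ∀ a : Bool, ∑ b ∈ Finset.univ.filter
      (fun b : Fin K → Bool => ∀ k : Fin K, K - m ≤ (k:ℕ) → b k = a),
        ∫ ω in Apast A (K - m) b, Ypot b ω ∂P
      = ∑ p ∈ Finset.univ.filter
          (fun b : Fin K → Bool => ∀ k : Fin K, K - m ≤ (k:ℕ) → b k = false),
          ∫ ω in Apast A (K - m) p, Ypot (extB p a) ω ∂P := by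
    intro a
    refine Finset.sum_nbij' (fun b => extB b false) (fun p => extB p a) ?_ ?_ ?_ ?_ ?_
    · intro b hb
      simp only [Finset.mem_filter, Finset.mem_univ, true_and] at hb ⊢
      intro k hk
      simp only [hextB, if_pos hk]
    · intro p hp
      simp only [Finset.mem_filter, Finset.mem_univ, true_and] at hp ⊢
      intro k hk
      simp only [hextB, if_pos hk]
    · intro b hb
      simp only [Finset.mem_filter, Finset.mem_univ, true_and] at hb
      funext k
      by_cases hk : K - m ≤ (k:ℕ)
      · simp only [hextB, if_pos hk]
        exact (hb k hk).symm
      · simp only [hextB, if_neg hk]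
    · intro p hp
      simp only [Finset.mem_filter, Finset.mem_univ, true_and] at hp
      funext k
      by_cases hk : K - m ≤ (k:ℕ)
      · simp only [hextB, if_pos hk]
        exact (hp k hk).symm
      · simp only [hextB, if_neg hk]
    · intro b hb
      simp only [Finset.mem_filter, Finset.mem_univ, true_and] at hb
      have hback : extB (extB b false) a = b := by
        funext k
        by_cases hk : K - m ≤ (k:ℕ)
        · simp only [hextB, if_pos hk]
          exact (hb k hk).symm
        · simp only [hextB, if_neg hk]
      have hset : Apast A (K - m) (extB b false) = Apast A (K - m) b :=
        Apast_congr A (K - m) (fun k hk => by simp only [hextB, if_neg (by omega : ¬ K - m ≤ (k:ℕ))])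
      rw [hback, hset]
  -- χ difference computation
  have hχ : ∀ (p : Fin K → Bool) (j : Fin K),
      Φ p j * (if (extB p true) (rev j) = true then (1:ℝ) else 0)
        - Φ p j * (if (extB p false) (rev j) = true then (1:ℝ) else 0)
      = if (j:ℕ) < m then Φ p j else 0 := by
    intro p j
    by_cases hj : (j:ℕ) < m
    · have hge : K - m ≤ ((rev j):ℕ) := (rev_ge_iff hm1 hmK j).mpr hj
      simp only [hextB, if_pos hge, if_pos hj]
      simp
    · have hge : ¬ K - m ≤ ((rev j):ℕ) := fun h => hj ((rev_ge_iff hm1 hmK j).mp h)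
      simp only [hextB, if_neg hge, if_neg hj]
      ring
  -- final difference computation
  have hdiff : (∑ p ∈ Finset.univ.filter
      (fun b : Fin K → Bool => ∀ k : Fin K, K - m ≤ (k:ℕ) → b k = false),
        ∫ ω in Apast A (K - m) p, Ypot (extB p true) ω ∂P)
      - (∑ p ∈ Finset.univ.filter
          (fun b : Fin K → Bool => ∀ k : Fin K, K - m ≤ (k:ℕ) → b k = false),
          ∫ ω in Apast A (K - m) p, Ypot (extB p false) ω ∂P)
      = ∑ j ∈ Finset.univ.filter (fun j : Fin K => (j:ℕ) < m), ψ j := by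
    rw [← Finset.sum_sub_distrib]
    have hper : ∀ p : Fin K → Bool,
        (∫ ω in Apast A (K - m) p, Ypot (extB p true) ω ∂P)
          - ∫ ω in Apast A (K - m) p, Ypot (extB p false) ω ∂P
        = ∑ j ∈ Finset.univ.filter (fun j : Fin K => (j:ℕ) < m),
            (P (Apast A (K - m) p)).toReal * Φ p j := by
      intro p
      rw [hI1 p (extB p true), hI1 p (extB p false), ← mul_sub]
      have : (Φ0 p + ∑ j : Fin K, Φ p j * (if (extB p true) (rev j) = true then (1:ℝ) else 0))
          - (Φ0 p + ∑ j : Fin K, Φ p j * (if (extB p false) (rev j) = true then (1:ℝ) else 0))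
          = ∑ j ∈ Finset.univ.filter (fun j : Fin K => (j:ℕ) < m), Φ p j := by
        rw [add_sub_add_left_eq_sub, ← Finset.sum_sub_distrib,
          Finset.sum_congr rfl (fun j _ => hχ p j)]
        exact (Finset.sum_filter _ _).symm
      rw [this, Finset.mul_sum]
    rw [Finset.sum_congr rfl (fun p _ => hper p), Finset.sum_comm]
    exact Finset.sum_congr rfl (fun j _ => hCj j)
  -- assemble θW
  rw [θW, hNumR true, hNumR false, hDenR true, hDenR false,
    mul_div_cancel_left₀ _ (toReal_ne_zero_of_pos hpos1),
    mul_div_cancel_left₀ _ (toReal_ne_zero_of_pos hpos0),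
    hSig true, hSig false]
  exact hdiff

end Aux9
/-- Theorem 1 of the paper. -/
theorem theorem1
    {Ω : Type*} [MeasurableSpace Ω] {𝓛 : Type*} [MeasurableSpace 𝓛]
    [Fintype 𝓛] [Nonempty 𝓛] [MeasurableSingletonClass 𝓛]
    (P : Measure Ω) [IsProbabilityMeasure P]
    {K m : ℕ} (hK : 1 ≤ K) (hm1 : 1 ≤ m) (hmK : m ≤ K)
    (A : Fin K → Ω → Bool) (L : Fin K → Ω → 𝓛)
    (hA : ∀ k, Measurable (A k)) (hL : ∀ k, Measurable (L k))
    (Y : Ω → ℝ) (hY : Measurable Y)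
    (Ypot : (Fin K → Bool) → Ω → ℝ)
    (hYpm : ∀ a, Measurable (Ypot a)) (hYpi : ∀ a, Integrable (Ypot a) P)
    (hpos1 : 0 < P (Etr A m true)) (hpos0 : 0 < P (Etr A m false))
    (hA1 : A1ok A Y Ypot) (hA2 : A2ok P A L Ypot) (hA3 : A3ok P A L)
    (ψ0 : ℝ) (ψ : Fin K → ℝ) (hMSM : MSMeq P Ypot ψ0 ψ)
    (hA4 : (∀ j, 0 ≤ ψ j) ∨ (∀ j, ψ j ≤ 0))
    (hA5 : A5ok P A Ypot m)
    (hA6 : ∀ j : Fin K, m ≤ (j : ℕ) → 0 < qcoef P A m j ∧ qcoef P A m j < 1) :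
    (θW P A m (Wsw P A L) Y = θKfull P Ypot ↔
        θW P A m (Wrsw P A L m) Y = θKfull P Ypot) ∧
      (θW P A m (Wrsw P A L m) Y = θKfull P Ypot ↔
        θW P A m (Wsw P A L) Y = θW P A m (Wrsw P A L m) Y) := by
  classical
  have hTsw := thetaSw_val P hm1 hmK A L hA hL Y Ypot hYpm hYpi hpos1 hpos0
    hA1 hA2 hA3 ψ0 ψ hMSM
  have hTrsw := thetaRsw_val P hm1 hmK A L hA hL Y Ypot hYpm hYpi hpos1 hpos0
    hA1 hA2 hA3 ψ0 ψ hMSM hA5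
  have hTK := thetaK_val P Ypot ψ0 ψ hMSM
  have hfilt : Finset.univ.filter (fun j : Fin K => ¬ (j:ℕ) < m)
      = Finset.univ.filter (fun j : Fin K => m ≤ (j:ℕ)) := by
    ext j; simp [not_lt]
  have hKsplit : (∑ j : Fin K, ψ j)
      = (∑ j ∈ Finset.univ.filter (fun j : Fin K => (j:ℕ) < m), ψ j)
        + ∑ j ∈ Finset.univ.filter (fun j : Fin K => m ≤ (j:ℕ)), ψ j := by
    rw [← hfilt, Finset.sum_filter_add_sum_filter_not]
  have hU0 : ((∑ j ∈ Finset.univ.filter (fun j : Fin K => m ≤ (j:ℕ)), ψ j) = 0)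
      ↔ ∀ j ∈ Finset.univ.filter (fun j : Fin K => m ≤ (j:ℕ)), ψ j = 0 := by
    have h := sum_sign_zero_iff
      (s := Finset.univ.filter (fun j : Fin K => m ≤ (j:ℕ)))
      (x := ψ) (c := fun _ => (1:ℝ)) (fun j _ => one_pos) hA4
    simpa using h
  have hgeq : ∀ j ∈ Finset.univ.filter (fun j : Fin K => m ≤ (j:ℕ)), m ≤ (j:ℕ) :=
    fun j hj => (Finset.mem_filter.mp hj).2
  have hV0 : ((∑ j ∈ Finset.univ.filter (fun j : Fin K => m ≤ (j:ℕ)),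
        ψ j * qcoef P A m j) = 0)
      ↔ ∀ j ∈ Finset.univ.filter (fun j : Fin K => m ≤ (j:ℕ)), ψ j = 0 :=
    sum_sign_zero_iff (fun j hj => (hA6 j (hgeq j hj)).1) hA4
  have hUV0 : ((∑ j ∈ Finset.univ.filter (fun j : Fin K => m ≤ (j:ℕ)), ψ j)
        - ∑ j ∈ Finset.univ.filter (fun j : Fin K => m ≤ (j:ℕ)), ψ j * qcoef P A m j = 0)
      ↔ ∀ j ∈ Finset.univ.filter (fun j : Fin K => m ≤ (j:ℕ)), ψ j = 0 := by
    have h1 : (∑ j ∈ Finset.univ.filter (fun j : Fin K => m ≤ (j:ℕ)), ψ j)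
        - (∑ j ∈ Finset.univ.filter (fun j : Fin K => m ≤ (j:ℕ)), ψ j * qcoef P A m j)
        = ∑ j ∈ Finset.univ.filter (fun j : Fin K => m ≤ (j:ℕ)),
            ψ j * (1 - qcoef P A m j) := by
      rw [← Finset.sum_sub_distrib]
      exact Finset.sum_congr rfl (fun j _ => by ring)
    rw [h1]
    exact sum_sign_zero_iff
      (fun j hj => by have := (hA6 j (hgeq j hj)).2; linarith) hA4
  rw [hTsw, hTrsw, hTK, hKsplit]
  constructor
  · constructor
    · intro h
      have hz := hUV0.mp (by linarith)
      have hU := hU0.mpr hz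
      linarith
    · intro h
      have hz := hU0.mp (by linarith)
      have hV := hV0.mpr hz
      linarith
  · constructor
    · intro h
      have hz := hU0.mp (by linarith)
      have hV := hV0.mpr hz
      linarith
    · intro h
      have hz := hV0.mp (by linarith)
      have hU := hU0.mpr hz
      linarith

end MSMPaper
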